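/- arXiv:1705.00849 — 10 statements merged into one kernel-verified Lean document; each statement's English description precedes it below -/
import Mathlib

section
/- Let D : (1/2, 1] → ℝ be the piecewise function D(x) = 1 − 1/x for x ∈ (1/2, 0.5511] ∪ (0.888, 1]; D(x) = 25/6 − 2√2 − 19/(12x) + 7/(32x²) for x ∈ (0.5511, (1+√2)/4]; D(x) = 13/3 − 2√2 − (9+√2)/(6x) + 1/(4x²) for x ∈ ((1+√2)/4, (2+√2)/4]; D(x) = 14/3 − 2√2 − 13/(6x) + 3/(8x²) for x ∈ ((2+√2)/4, 0.888]. Then for every p ∈ (1/2, 1], −log₂ p + (1/p)·(−1 + ∫_{1/2}^{1} D(x) dx + ∫_{1/2}^{p} D(x) dx) ≤ −1.40118. -/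
lemma sqrt2_lo : (1.4142135623 : ℝ) < Real.sqrt 2 := by
  have h : Real.sqrt 2 ^ 2 = 2 := Real.sq_sqrt (by norm_num)
  nlinarith [Real.sqrt_nonneg 2]

lemma sqrt2_hi : Real.sqrt 2 < (1.4142135624 : ℝ) := by
  have h : Real.sqrt 2 ^ 2 = 2 := Real.sq_sqrt (by norm_num)
  nlinarith [Real.sqrt_nonneg 2]
lemma La_lb : (-0.5958389982 : ℝ) ≤ Real.log (0.5511 : ℝ) := by
  rw [Real.le_log_iff_exp_le (by positivity)]
  have h := Real.exp_bound (x := (-0.5958389982 : ℝ))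
    (by rw [abs_le]; constructor <;> norm_num) (n := 13) (by norm_num)
  have h2 := (abs_le.mp h).2
  have hs : |(-0.5958389982 : ℝ)| = 0.5958389982 := by rw [abs_of_neg (by norm_num)]; norm_num
  rw [hs] at h2
  have hsum : (∑ m ∈ Finset.range 13, (-0.5958389982 : ℝ) ^ m / m.factorial) +
      0.5958389982 ^ 13 * ((13:ℕ).succ / ((13:ℕ).factorial * 13)) ≤ (0.5511 : ℝ) := by
    simp only [Finset.sum_range_succ, Finset.sum_range_zero, Nat.factorial]
    norm_num
  linarith

lemma La_ub : Real.log (0.5511 : ℝ) ≤ (-0.5958389980 : ℝ) := by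
  rw [Real.log_le_iff_le_exp (by positivity)]
  have h := Real.exp_bound (x := (-0.5958389980 : ℝ))
    (by rw [abs_le]; constructor <;> norm_num) (n := 13) (by norm_num)
  have h1 := (abs_le.mp h).1
  have hs : |(-0.5958389980 : ℝ)| = 0.5958389980 := by rw [abs_of_neg (by norm_num)]; norm_num
  rw [hs] at h1
  have hsum : (0.5511 : ℝ) ≤ (∑ m ∈ Finset.range 13, (-0.5958389980 : ℝ) ^ m / m.factorial) -
      0.5958389980 ^ 13 * ((13:ℕ).succ / ((13:ℕ).factorial * 13)) := by
    simp only [Finset.sum_range_succ, Finset.sum_range_zero, Nat.factorial]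
    norm_num
  linarith

lemma Lb_lb : (-0.5049207742 : ℝ) ≤ Real.log ((1 + Real.sqrt 2)/4) := by
  rw [Real.le_log_iff_exp_le (by positivity)]
  have h := Real.exp_bound (x := (-0.5049207742 : ℝ))
    (by rw [abs_le]; constructor <;> norm_num) (n := 13) (by norm_num)
  have h2 := (abs_le.mp h).2
  have hs : |(-0.5049207742 : ℝ)| = 0.5049207742 := by rw [abs_of_neg (by norm_num)]; norm_num
  rw [hs] at h2
  have hs2 := sqrt2_lo
  have hsum : (∑ m ∈ Finset.range 13, (-0.5049207742 : ℝ) ^ m / m.factorial) +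
      0.5049207742 ^ 13 * ((13:ℕ).succ / ((13:ℕ).factorial * 13)) ≤ (1 + 1.4142135623)/4 := by
    simp only [Finset.sum_range_succ, Finset.sum_range_zero, Nat.factorial]
    norm_num
  linarith

lemma Lb_ub : Real.log ((1 + Real.sqrt 2)/4) ≤ (-0.5049207740 : ℝ) := by
  rw [Real.log_le_iff_le_exp (by positivity)]
  have h := Real.exp_bound (x := (-0.5049207740 : ℝ))
    (by rw [abs_le]; constructor <;> norm_num) (n := 13) (by norm_num)
  have h1 := (abs_le.mp h).1
  have hs : |(-0.5049207740 : ℝ)| = 0.5049207740 := by rw [abs_of_neg (by norm_num)]; norm_num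
  rw [hs] at h1
  have hs2 := sqrt2_hi
  have hsum : (1 + 1.4142135624)/4 ≤ (∑ m ∈ Finset.range 13, (-0.5049207740 : ℝ) ^ m / m.factorial) -
      0.5049207740 ^ 13 * ((13:ℕ).succ / ((13:ℕ).factorial * 13)) := by
    simp only [Finset.sum_range_succ, Finset.sum_range_zero, Nat.factorial]
    norm_num
  linarith

lemma Lc_lb : (-0.1583471839 : ℝ) ≤ Real.log ((2 + Real.sqrt 2)/4) := by
  rw [Real.le_log_iff_exp_le (by positivity)]
  have h := Real.exp_bound (x := (-0.1583471839 : ℝ))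
    (by rw [abs_le]; constructor <;> norm_num) (n := 10) (by norm_num)
  have h2 := (abs_le.mp h).2
  have hs : |(-0.1583471839 : ℝ)| = 0.1583471839 := by rw [abs_of_neg (by norm_num)]; norm_num
  rw [hs] at h2
  have hs2 := sqrt2_lo
  have hsum : (∑ m ∈ Finset.range 10, (-0.1583471839 : ℝ) ^ m / m.factorial) +
      0.1583471839 ^ 10 * ((10:ℕ).succ / ((10:ℕ).factorial * 10)) ≤ (2 + 1.4142135623)/4 := by
    simp only [Finset.sum_range_succ, Finset.sum_range_zero, Nat.factorial]
    norm_num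
  linarith

lemma Lc_ub : Real.log ((2 + Real.sqrt 2)/4) ≤ (-0.1583471837 : ℝ) := by
  rw [Real.log_le_iff_le_exp (by positivity)]
  have h := Real.exp_bound (x := (-0.1583471837 : ℝ))
    (by rw [abs_le]; constructor <;> norm_num) (n := 10) (by norm_num)
  have h1 := (abs_le.mp h).1
  have hs : |(-0.1583471837 : ℝ)| = 0.1583471837 := by rw [abs_of_neg (by norm_num)]; norm_num
  rw [hs] at h1
  have hs2 := sqrt2_hi
  have hsum : (2 + 1.4142135624)/4 ≤ (∑ m ∈ Finset.range 10, (-0.1583471837 : ℝ) ^ m / m.factorial) -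
      0.1583471837 ^ 10 * ((10:ℕ).succ / ((10:ℕ).factorial * 10)) := by
    simp only [Finset.sum_range_succ, Finset.sum_range_zero, Nat.factorial]
    norm_num
  linarith

lemma Ld_lb : (-0.1187835360 : ℝ) ≤ Real.log (0.888 : ℝ) := by
  rw [Real.le_log_iff_exp_le (by positivity)]
  have h := Real.exp_bound (x := (-0.1187835360 : ℝ))
    (by rw [abs_le]; constructor <;> norm_num) (n := 10) (by norm_num)
  have h2 := (abs_le.mp h).2
  have hs : |(-0.1187835360 : ℝ)| = 0.1187835360 := by rw [abs_of_neg (by norm_num)]; norm_num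
  rw [hs] at h2
  have hsum : (∑ m ∈ Finset.range 10, (-0.1187835360 : ℝ) ^ m / m.factorial) +
      0.1187835360 ^ 10 * ((10:ℕ).succ / ((10:ℕ).factorial * 10)) ≤ (0.888 : ℝ) := by
    simp only [Finset.sum_range_succ, Finset.sum_range_zero, Nat.factorial]
    norm_num
  linarith

lemma Ld_ub : Real.log (0.888 : ℝ) ≤ (-0.1187835359 : ℝ) := by
  rw [Real.log_le_iff_le_exp (by positivity)]
  have h := Real.exp_bound (x := (-0.1187835359 : ℝ))
    (by rw [abs_le]; constructor <;> norm_num) (n := 10) (by norm_num)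
  have h1 := (abs_le.mp h).1
  have hs : |(-0.1187835359 : ℝ)| = 0.1187835359 := by rw [abs_of_neg (by norm_num)]; norm_num
  rw [hs] at h1
  have hsum : (0.888 : ℝ) ≤ (∑ m ∈ Finset.range 10, (-0.1187835359 : ℝ) ^ m / m.factorial) -
      0.1187835359 ^ 10 * ((10:ℕ).succ / ((10:ℕ).factorial * 10)) := by
    simp only [Finset.sum_range_succ, Finset.sum_range_zero, Nat.factorial]
    norm_num
  linarith

lemma Lq_lb : (-0.1072511908 : ℝ) ≤ Real.log (0.8983 : ℝ) := by
  rw [Real.le_log_iff_exp_le (by positivity)]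
  have h := Real.exp_bound (x := (-0.1072511908 : ℝ))
    (by rw [abs_le]; constructor <;> norm_num) (n := 10) (by norm_num)
  have h2 := (abs_le.mp h).2
  have hs : |(-0.1072511908 : ℝ)| = 0.1072511908 := by rw [abs_of_neg (by norm_num)]; norm_num
  rw [hs] at h2
  have hsum : (∑ m ∈ Finset.range 10, (-0.1072511908 : ℝ) ^ m / m.factorial) +
      0.1072511908 ^ 10 * ((10:ℕ).succ / ((10:ℕ).factorial * 10)) ≤ (0.8983 : ℝ) := by
    simp only [Finset.sum_range_succ, Finset.sum_range_zero, Nat.factorial]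
    norm_num
  linarith

lemma Lq_ub : Real.log (0.8983 : ℝ) ≤ (-0.1072511907 : ℝ) := by
  rw [Real.log_le_iff_le_exp (by positivity)]
  have h := Real.exp_bound (x := (-0.1072511907 : ℝ))
    (by rw [abs_le]; constructor <;> norm_num) (n := 10) (by norm_num)
  have h1 := (abs_le.mp h).1
  have hs : |(-0.1072511907 : ℝ)| = 0.1072511907 := by rw [abs_of_neg (by norm_num)]; norm_num
  rw [hs] at h1
  have hsum : (0.8983 : ℝ) ≤ (∑ m ∈ Finset.range 10, (-0.1072511907 : ℝ) ^ m / m.factorial) -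
      0.1072511907 ^ 10 * ((10:ℕ).succ / ((10:ℕ).factorial * 10)) := by
    simp only [Finset.sum_range_succ, Finset.sum_range_zero, Nat.factorial]
    norm_num
  linarith
open Set intervalIntegral MeasureTheory

/-- Antiderivative of `x ↦ A - B/x + C/x²`. -/
noncomputable def Phi (A B C : ℝ) : ℝ → ℝ := fun x => A*x - B*Real.log x - C*x⁻¹

/-- The per-piece function `G`. -/
noncomputable def Gf (A B C N : ℝ) : ℝ → ℝ :=
  fun p => -(p*Real.log p)*(Real.log 2)⁻¹ + N + (A*p - B*Real.log p - C*p⁻¹) + 1.40118*p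

noncomputable def Gf' (A B C : ℝ) : ℝ → ℝ :=
  fun p => -(Real.log p + 1)*(Real.log 2)⁻¹ + (A - B*p⁻¹ + C*(p⁻¹*p⁻¹)) + 1.40118

noncomputable def Gf'' (B C : ℝ) : ℝ → ℝ :=
  fun p => -(p⁻¹*(Real.log 2)⁻¹) + B*(p⁻¹*p⁻¹) - 2*C*(p⁻¹*p⁻¹*p⁻¹)

lemma hasDerivAt_Phi {A B C x : ℝ} (hx : 0 < x) :
    HasDerivAt (Phi A B C) (A - B*x⁻¹ + C*(x⁻¹*x⁻¹)) x := by
  have h1 : HasDerivAt (fun y : ℝ => A*y) A x := by simpa using (hasDerivAt_id x).const_mul A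
  have h2 : HasDerivAt (fun y : ℝ => B*Real.log y) (B * x⁻¹) x :=
    (Real.hasDerivAt_log hx.ne').const_mul B
  have h3 : HasDerivAt (fun y : ℝ => C*y⁻¹) (C * (-(x^2)⁻¹)) x :=
    (hasDerivAt_inv hx.ne').const_mul C
  have := (h1.sub h2).sub h3
  refine this.congr_deriv ?_
  field_simp; ring

lemma hasDerivAt_Gf {A B C N x : ℝ} (hx : 0 < x) :
    HasDerivAt (Gf A B C N) (Gf' A B C x) x := by
  have hlog : HasDerivAt (fun y : ℝ => -(y*Real.log y)*(Real.log 2)⁻¹)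
      (-(Real.log x + 1)*(Real.log 2)⁻¹) x := by
    have h1 : HasDerivAt (fun y : ℝ => y*Real.log y) (1*Real.log x + x*x⁻¹) x :=
      (hasDerivAt_id x).mul (Real.hasDerivAt_log hx.ne')
    have h2 := (h1.neg).mul_const (Real.log 2)⁻¹
    refine h2.congr_deriv ?_
    rw [mul_inv_cancel₀ hx.ne']; ring
  have hphi := hasDerivAt_Phi (A := A) (B := B) (C := C) hx
  have hlin : HasDerivAt (fun y : ℝ => N + (1.40118:ℝ)*y) 1.40118 x := by
    simpa using ((hasDerivAt_id x).const_mul (1.40118:ℝ)).const_add N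
  have h := (hlog.add hphi).add hlin
  have hGf : Gf A B C N = fun y => (-(y*Real.log y)*(Real.log 2)⁻¹ + Phi A B C y)
      + (N + 1.40118*y) := by
    funext y; simp only [Gf, Phi]; ring
  rw [hGf]
  exact h

lemma hasDerivAt_Gf' {A B C x : ℝ} (hx : 0 < x) :
    HasDerivAt (Gf' A B C) (Gf'' B C x) x := by
  have h1 : HasDerivAt (fun y : ℝ => -(Real.log y + 1)*(Real.log 2)⁻¹)
      (-(x⁻¹*(Real.log 2)⁻¹)) x := by
    have := ((Real.hasDerivAt_log hx.ne').add_const 1).neg.mul_const (Real.log 2)⁻¹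
    refine this.congr_deriv ?_; ring
  have h2 : HasDerivAt (fun y : ℝ => B*y⁻¹) (B * (-(x^2)⁻¹)) x :=
    (hasDerivAt_inv hx.ne').const_mul B
  have h3 : HasDerivAt (fun y : ℝ => C*(y⁻¹*y⁻¹)) (C * (-(x^2)⁻¹ * x⁻¹ + x⁻¹ * -(x^2)⁻¹)) x := by
    exact ((hasDerivAt_inv hx.ne').mul (hasDerivAt_inv hx.ne')).const_mul C
  have h := (h1.sub h2).add h3
  have hG : Gf' A B C = fun y => (-(Real.log y + 1)*(Real.log 2)⁻¹ - B*y⁻¹ + C*(y⁻¹*y⁻¹))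
      + (A + 1.40118) := by
    funext y; simp only [Gf']; ring
  rw [hG]
  refine (h.add_const (A + 1.40118)).congr_deriv ?_
  simp only [Gf'']
  field_simp; ring

/-- Integral of a function equal to `A - B/x + C/x²` on `Ioc lo hi`. -/
lemma intervalIntegrable_piece {f : ℝ → ℝ} {A B C lo hi : ℝ} (h0 : 0 < lo) (hlh : lo ≤ hi)
    (h : ∀ x ∈ Set.Ioc lo hi, f x = A - B*x⁻¹ + C*(x⁻¹*x⁻¹)) :
    IntervalIntegrable f volume lo hi := by
  rw [intervalIntegrable_iff, uIoc_of_le hlh]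
  have hg : IntegrableOn (fun x : ℝ => A - B*x⁻¹ + C*(x⁻¹*x⁻¹)) (Set.Ioc lo hi) volume := by
    apply (ContinuousOn.integrableOn_Icc ?_).mono_set Set.Ioc_subset_Icc_self
    apply ContinuousOn.add
    · apply ContinuousOn.sub continuousOn_const
      exact continuousOn_const.mul (continuousOn_inv₀.mono (fun x hx => ne_of_gt (lt_of_lt_of_le h0 hx.1)))
    · exact continuousOn_const.mul ((continuousOn_inv₀.mono (fun x hx => ne_of_gt (lt_of_lt_of_le h0 hx.1))).mul (continuousOn_inv₀.mono (fun x hx => ne_of_gt (lt_of_lt_of_le h0 hx.1))))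
  exact (integrableOn_congr_fun h measurableSet_Ioc).mpr hg

lemma integral_piece {f : ℝ → ℝ} {A B C lo hi : ℝ} (h0 : 0 < lo) (hlh : lo ≤ hi)
    (h : ∀ x ∈ Set.Ioc lo hi, f x = A - B*x⁻¹ + C*(x⁻¹*x⁻¹)) :
    ∫ x in lo..hi, f x = Phi A B C hi - Phi A B C lo := by
  have hcg : ∫ x in lo..hi, f x = ∫ x in lo..hi, (A - B*x⁻¹ + C*(x⁻¹*x⁻¹)) := by
    apply intervalIntegral.integral_congr_ae
    rw [uIoc_of_le hlh]
    exact Filter.Eventually.of_forall (fun x hx => h x hx)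
  rw [hcg]
  apply integral_eq_sub_of_hasDerivAt
  · intro x hx
    rw [uIcc_of_le hlh] at hx
    exact hasDerivAt_Phi (lt_of_lt_of_le h0 hx.1)
  · exact intervalIntegrable_piece h0 hlh (fun x _ => rfl)

/-- monotone from derivative -/
lemma monoOn {f f' : ℝ → ℝ} {lo hi : ℝ}
    (hd : ∀ x ∈ Set.Icc lo hi, HasDerivAt f (f' x) x)
    (h0 : ∀ x ∈ Set.Ioo lo hi, 0 ≤ f' x) : MonotoneOn f (Set.Icc lo hi) := by
  apply monotoneOn_of_deriv_nonneg (convex_Icc lo hi)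
  · exact fun x hx => (hd x hx).continuousAt.continuousWithinAt
  · intro x hx
    rw [interior_Icc] at hx
    exact ((hd x (Set.Ioo_subset_Icc_self hx)).differentiableAt).differentiableWithinAt
  · intro x hx
    rw [interior_Icc] at hx
    rw [(hd x (Set.Ioo_subset_Icc_self hx)).deriv]
    exact h0 x hx

lemma antiOn {f f' : ℝ → ℝ} {lo hi : ℝ}
    (hd : ∀ x ∈ Set.Icc lo hi, HasDerivAt f (f' x) x)
    (h0 : ∀ x ∈ Set.Ioo lo hi, f' x ≤ 0) : AntitoneOn f (Set.Icc lo hi) := by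
  apply antitoneOn_of_deriv_nonpos (convex_Icc lo hi)
  · exact fun x hx => (hd x hx).continuousAt.continuousWithinAt
  · intro x hx
    rw [interior_Icc] at hx
    exact ((hd x (Set.Ioo_subset_Icc_self hx)).differentiableAt).differentiableWithinAt
  · intro x hx
    rw [interior_Icc] at hx
    rw [(hd x (Set.Ioo_subset_Icc_self hx)).deriv]
    exact h0 x hx

/-- convex piece: bounded by endpoint values -/
lemma convex_max {f f' : ℝ → ℝ} {lo hi : ℝ}
    (hd : ∀ x ∈ Set.Icc lo hi, HasDerivAt f (f' x) x)
    (hmono : MonotoneOn f' (Set.Icc lo hi))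
    {p : ℝ} (hp : p ∈ Set.Icc lo hi) (hflo : f lo ≤ 0) (hfhi : f hi ≤ 0) : f p ≤ 0 := by
  rcases le_or_gt (f' p) 0 with h' | h'
  · have hsub : Set.Icc lo p ⊆ Set.Icc lo hi := Set.Icc_subset_Icc le_rfl hp.2
    have hA : AntitoneOn f (Set.Icc lo p) := by
      apply antiOn (fun x hx => hd x (hsub hx))
      intro x hx
      exact le_trans (hmono (hsub ⟨hx.1.le, hx.2.le⟩) hp hx.2.le) h'
    calc f p ≤ f lo := hA ⟨le_rfl, hp.1⟩ ⟨hp.1, le_rfl⟩ hp.1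
    _ ≤ 0 := hflo
  · have hsub : Set.Icc p hi ⊆ Set.Icc lo hi := Set.Icc_subset_Icc hp.1 le_rfl
    have hM : MonotoneOn f (Set.Icc p hi) := by
      apply monoOn (fun x hx => hd x (hsub hx))
      intro x hx
      exact le_trans h'.le (hmono hp (hsub ⟨hx.1.le, hx.2.le⟩) hx.1.le)
    calc f p ≤ f hi := hM ⟨le_rfl, hp.2⟩ ⟨hp.2, le_rfl⟩ hp.2
    _ ≤ 0 := hfhi

/-- concave piece: bounded by a tangent line -/
lemma concave_tangent {f f' : ℝ → ℝ} {lo hi q : ℝ}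
    (hd : ∀ x ∈ Set.Icc lo hi, HasDerivAt f (f' x) x)
    (hanti : AntitoneOn f' (Set.Icc lo hi)) (hq : q ∈ Set.Icc lo hi)
    {p : ℝ} (hp : p ∈ Set.Icc lo hi)
    (h1 : f q + f' q * (lo - q) ≤ 0) (h2 : f q + f' q * (hi - q) ≤ 0) : f p ≤ 0 := by
  have key : f p ≤ f q + f' q * (p - q) := by
    set g : ℝ → ℝ := fun x => f x - f' q * x with hg
    have hgd : ∀ x ∈ Set.Icc lo hi, HasDerivAt g (f' x - f' q) x :=
      fun x hx => (hd x hx).sub (((hasDerivAt_id x).const_mul (f' q)).congr_deriv (mul_one _))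
    rcases le_or_gt p q with hpq | hpq
    · have hsub : Set.Icc p q ⊆ Set.Icc lo hi := Set.Icc_subset_Icc hp.1 hq.2
      have hM : MonotoneOn g (Set.Icc p q) := by
        apply monoOn (fun x hx => hgd x (hsub hx))
        intro x hx
        have := hanti (hsub ⟨hx.1.le, hx.2.le⟩) hq hx.2.le
        linarith
      have := hM ⟨le_rfl, hpq⟩ ⟨hpq, le_rfl⟩ hpq
      simp only [hg] at this
      linarith
    · have hsub : Set.Icc q p ⊆ Set.Icc lo hi := Set.Icc_subset_Icc hq.1 hp.2
      have hA : AntitoneOn g (Set.Icc q p) := by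
        apply antiOn (fun x hx => hgd x (hsub hx))
        intro x hx
        have := hanti hq (hsub ⟨hx.1.le, hx.2.le⟩) hx.1.le
        linarith
      have := hA ⟨le_rfl, hpq.le⟩ ⟨hpq.le, le_rfl⟩ hpq.le
      simp only [hg] at this
      linarith
  rcases le_or_gt (f' q) 0 with h' | h'
  · nlinarith [hp.1, hp.2]
  · nlinarith [hp.1, hp.2]
lemma hs2 : Real.sqrt 2 * Real.sqrt 2 = 2 := Real.mul_self_sqrt (by norm_num)

lemma hinvb : (((1 + Real.sqrt 2)/4 : ℝ))⁻¹ = 4*Real.sqrt 2 - 4 := by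
  have hb : ((1 + Real.sqrt 2)/4 : ℝ) ≠ 0 := by positivity
  field_simp
  nlinarith [hs2]

lemma hinvc : (((2 + Real.sqrt 2)/4 : ℝ))⁻¹ = 4 - 2*Real.sqrt 2 := by
  have hb : ((2 + Real.sqrt 2)/4 : ℝ) ≠ 0 := by positivity
  field_simp
  nlinarith [hs2]

lemma hloghalf : Real.log (1/2 : ℝ) = -Real.log 2 := by
  rw [one_div, Real.log_inv]

lemma hl2pos : (0:ℝ) < Real.log 2 := Real.log_pos (by norm_num)

lemma hl2il2 : Real.log 2 * (Real.log 2)⁻¹ = 1 := mul_inv_cancel₀ (ne_of_gt hl2pos)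

lemma il2_lo : (1.442695039 : ℝ) ≤ (Real.log 2)⁻¹ := by
  have h1 := Real.log_two_lt_d9
  have h2 : (0:ℝ) < (Real.log 2)⁻¹ := inv_pos.mpr hl2pos
  nlinarith [hl2il2]

lemma il2_hi : (Real.log 2)⁻¹ ≤ (1.442695042 : ℝ) := by
  have h1 := Real.log_two_gt_d9
  have h2 : (0:ℝ) < (Real.log 2)⁻¹ := inv_pos.mpr hl2pos
  nlinarith [hl2il2]

lemma mLaIL2_lo : (-0.859613968534 : ℝ) ≤ Real.log 0.5511 * (Real.log 2)⁻¹ := by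
  nlinarith [La_lb, La_ub, il2_lo, il2_hi]
lemma mLaIL2_hi : Real.log 0.5511 * (Real.log 2)⁻¹ ≤ (-0.859613966457 : ℝ) := by
  nlinarith [La_lb, La_ub, il2_lo, il2_hi]
lemma mLbIL2_lo : (-0.728446697542 : ℝ) ≤ Real.log ((1 + Real.sqrt 2)/4) * (Real.log 2)⁻¹ := by
  nlinarith [Lb_lb, Lb_ub, il2_lo, il2_hi]
lemma mLbIL2_hi : Real.log ((1 + Real.sqrt 2)/4) * (Real.log 2)⁻¹ ≤ (-0.728446695737 : ℝ) := by
  nlinarith [Lb_lb, Lb_ub, il2_lo, il2_hi]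
lemma msLb_lo : (-0.714065806812 : ℝ) ≤ Real.sqrt 2 * Real.log ((1 + Real.sqrt 2)/4) := by
  nlinarith [Lb_lb, Lb_ub, sqrt2_lo, sqrt2_hi]
lemma msLb_hi : Real.sqrt 2 * Real.log ((1 + Real.sqrt 2)/4) ≤ (-0.714065806477 : ℝ) := by
  nlinarith [Lb_lb, Lb_ub, sqrt2_lo, sqrt2_hi]
lemma msLbIL2_lo : (-1.03017919925 : ℝ) ≤ Real.sqrt 2 * Real.log ((1 + Real.sqrt 2)/4) * (Real.log 2)⁻¹ := by
  have h0 : (0:ℝ) ≤ (Real.log 2)⁻¹ := by positivity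
  have h1 := mul_le_mul_of_nonneg_right msLb_lo h0
  linarith [il2_hi]
lemma msLbIL2_hi : Real.sqrt 2 * Real.log ((1 + Real.sqrt 2)/4) * (Real.log 2)⁻¹ ≤ (-1.03017919640 : ℝ) := by
  have h0 : (0:ℝ) ≤ (Real.log 2)⁻¹ := by positivity
  have h1 := mul_le_mul_of_nonneg_right msLb_hi h0
  linarith [il2_lo]
lemma mLcIL2_lo : (-0.228446697128 : ℝ) ≤ Real.log ((2 + Real.sqrt 2)/4) * (Real.log 2)⁻¹ := by
  nlinarith [Lc_lb, Lc_ub, il2_lo, il2_hi]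
lemma mLcIL2_hi : Real.log ((2 + Real.sqrt 2)/4) * (Real.log 2)⁻¹ ≤ (-0.228446696363 : ℝ) := by
  nlinarith [Lc_lb, Lc_ub, il2_lo, il2_hi]
lemma msLc_lo : (-0.22393673504 : ℝ) ≤ Real.sqrt 2 * Real.log ((2 + Real.sqrt 2)/4) := by
  nlinarith [Lc_lb, Lc_ub, sqrt2_lo, sqrt2_hi]
lemma msLc_hi : Real.sqrt 2 * Real.log ((2 + Real.sqrt 2)/4) ≤ (-0.22393673474 : ℝ) := by
  nlinarith [Lc_lb, Lc_ub, sqrt2_lo, sqrt2_hi]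
lemma msLcIL2_lo : (-0.32307241740 : ℝ) ≤ Real.sqrt 2 * Real.log ((2 + Real.sqrt 2)/4) * (Real.log 2)⁻¹ := by
  have h0 : (0:ℝ) ≤ (Real.log 2)⁻¹ := by positivity
  have h1 := mul_le_mul_of_nonneg_right msLc_lo h0
  linarith [il2_hi]
lemma msLcIL2_hi : Real.sqrt 2 * Real.log ((2 + Real.sqrt 2)/4) * (Real.log 2)⁻¹ ≤ (-0.32307241623 : ℝ) := by
  have h0 : (0:ℝ) ≤ (Real.log 2)⁻¹ := by positivity
  have h1 := mul_le_mul_of_nonneg_right msLc_hi h0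
  linarith [il2_lo]
lemma mLdIL2_lo : (-0.171368418459 : ℝ) ≤ Real.log 0.888 * (Real.log 2)⁻¹ := by
  nlinarith [Ld_lb, Ld_ub, il2_lo, il2_hi]
lemma mLdIL2_hi : Real.log 0.888 * (Real.log 2)⁻¹ ≤ (-0.171368417957 : ℝ) := by
  nlinarith [Ld_lb, Ld_ub, il2_lo, il2_hi]
lemma mLqIL2_lo : (-0.154730761216 : ℝ) ≤ Real.log 0.8983 * (Real.log 2)⁻¹ := by
  nlinarith [Lq_lb, Lq_ub, il2_lo, il2_hi]
lemma mLqIL2_hi : Real.log 0.8983 * (Real.log 2)⁻¹ ≤ (-0.154730760749 : ℝ) := by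
  nlinarith [Lq_lb, Lq_ub, il2_lo, il2_hi]
/-- `∫ D` over `(1/2, 1]` in closed form. -/
noncomputable def C0E : ℝ :=
  (Phi 1 1 0 0.5511 - Phi 1 1 0 (1/2))
  + (Phi (25/6 - 2*Real.sqrt 2) (19/12) (7/32) ((1 + Real.sqrt 2)/4)
      - Phi (25/6 - 2*Real.sqrt 2) (19/12) (7/32) 0.5511)
  + (Phi (13/3 - 2*Real.sqrt 2) ((9 + Real.sqrt 2)/6) (1/4) ((2 + Real.sqrt 2)/4)
      - Phi (13/3 - 2*Real.sqrt 2) ((9 + Real.sqrt 2)/6) (1/4) ((1 + Real.sqrt 2)/4))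
  + (Phi (14/3 - 2*Real.sqrt 2) (13/6) (3/8) 0.888
      - Phi (14/3 - 2*Real.sqrt 2) (13/6) (3/8) ((2 + Real.sqrt 2)/4))
  + (Phi 1 1 0 1 - Phi 1 1 0 0.888)

noncomputable def S2E : ℝ := Phi 1 1 0 0.5511 - Phi 1 1 0 (1/2)
noncomputable def S3E : ℝ := S2E + (Phi (25/6 - 2*Real.sqrt 2) (19/12) (7/32) ((1 + Real.sqrt 2)/4)
      - Phi (25/6 - 2*Real.sqrt 2) (19/12) (7/32) 0.5511)
noncomputable def S4E : ℝ := S3E + (Phi (13/3 - 2*Real.sqrt 2) ((9 + Real.sqrt 2)/6) (1/4) ((2 + Real.sqrt 2)/4)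
      - Phi (13/3 - 2*Real.sqrt 2) ((9 + Real.sqrt 2)/6) (1/4) ((1 + Real.sqrt 2)/4))
noncomputable def S5E : ℝ := S4E + (Phi (14/3 - 2*Real.sqrt 2) (13/6) (3/8) 0.888
      - Phi (14/3 - 2*Real.sqrt 2) (13/6) (3/8) ((2 + Real.sqrt 2)/4))

noncomputable def N1E : ℝ := -1 + C0E - Phi 1 1 0 (1/2)
noncomputable def N2E : ℝ := -1 + C0E + S2E - Phi (25/6 - 2*Real.sqrt 2) (19/12) (7/32) 0.5511
noncomputable def N3E : ℝ := -1 + C0E + S3E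
  - Phi (13/3 - 2*Real.sqrt 2) ((9 + Real.sqrt 2)/6) (1/4) ((1 + Real.sqrt 2)/4)
noncomputable def N4E : ℝ := -1 + C0E + S4E
  - Phi (14/3 - 2*Real.sqrt 2) (13/6) (3/8) ((2 + Real.sqrt 2)/4)
noncomputable def N5E : ℝ := -1 + C0E + S5E - Phi 1 1 0 0.888
lemma num_G1_lo : Gf 1 1 0 N1E (1/2 : ℝ) ≤ 0 := by
  simp only [Gf, N1E, C0E, Phi]
  rw [hloghalf, Real.log_one, hinvb, hinvc]
  linarith [La_lb, La_ub, Lb_lb, Lb_ub, Lc_lb, Lc_ub, Ld_lb, Ld_ub, Lq_lb, Lq_ub,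
    sqrt2_lo, sqrt2_hi, il2_lo, il2_hi, Real.log_two_gt_d9, Real.log_two_lt_d9,
    hs2, hl2il2, mLaIL2_lo, mLaIL2_hi, mLbIL2_lo, mLbIL2_hi, msLb_lo, msLb_hi,
    msLbIL2_lo, msLbIL2_hi, mLcIL2_lo, mLcIL2_hi, msLc_lo, msLc_hi,
    msLcIL2_lo, msLcIL2_hi, mLdIL2_lo, mLdIL2_hi, mLqIL2_lo, mLqIL2_hi]

lemma num_G1_hi : Gf 1 1 0 N1E (0.5511 : ℝ) ≤ 0 := by
  simp only [Gf, N1E, C0E, Phi]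
  rw [hloghalf, Real.log_one, hinvb, hinvc]
  linarith [La_lb, La_ub, Lb_lb, Lb_ub, Lc_lb, Lc_ub, Ld_lb, Ld_ub, Lq_lb, Lq_ub,
    sqrt2_lo, sqrt2_hi, il2_lo, il2_hi, Real.log_two_gt_d9, Real.log_two_lt_d9,
    hs2, hl2il2, mLaIL2_lo, mLaIL2_hi, mLbIL2_lo, mLbIL2_hi, msLb_lo, msLb_hi,
    msLbIL2_lo, msLbIL2_hi, mLcIL2_lo, mLcIL2_hi, msLc_lo, msLc_hi,
    msLcIL2_lo, msLcIL2_hi, mLdIL2_lo, mLdIL2_hi, mLqIL2_lo, mLqIL2_hi]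

lemma num_G2_hi : Gf (25/6 - 2*Real.sqrt 2) (19/12) (7/32) N2E ((1 + Real.sqrt 2)/4) ≤ 0 := by
  simp only [Gf, N2E, S2E, C0E, Phi]
  rw [hloghalf, Real.log_one, hinvb, hinvc]
  linarith [La_lb, La_ub, Lb_lb, Lb_ub, Lc_lb, Lc_ub, Ld_lb, Ld_ub, Lq_lb, Lq_ub,
    sqrt2_lo, sqrt2_hi, il2_lo, il2_hi, Real.log_two_gt_d9, Real.log_two_lt_d9,
    hs2, hl2il2, mLaIL2_lo, mLaIL2_hi, mLbIL2_lo, mLbIL2_hi, msLb_lo, msLb_hi,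
    msLbIL2_lo, msLbIL2_hi, mLcIL2_lo, mLcIL2_hi, msLc_lo, msLc_hi,
    msLcIL2_lo, msLcIL2_hi, mLdIL2_lo, mLdIL2_hi, mLqIL2_lo, mLqIL2_hi]

lemma num_G2p_hi : 0 ≤ Gf' (25/6 - 2*Real.sqrt 2) (19/12) (7/32) ((1 + Real.sqrt 2)/4) := by
  simp only [Gf']
  rw [hinvb]
  nlinarith [La_lb, La_ub, Lb_lb, Lb_ub, Lc_lb, Lc_ub, Ld_lb, Ld_ub, Lq_lb, Lq_ub,
    sqrt2_lo, sqrt2_hi, il2_lo, il2_hi, Real.log_two_gt_d9, Real.log_two_lt_d9,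
    hs2, hl2il2, mLaIL2_lo, mLaIL2_hi, mLbIL2_lo, mLbIL2_hi, msLb_lo, msLb_hi,
    msLbIL2_lo, msLbIL2_hi, mLcIL2_lo, mLcIL2_hi, msLc_lo, msLc_hi,
    msLcIL2_lo, msLcIL2_hi, mLdIL2_lo, mLdIL2_hi, mLqIL2_lo, mLqIL2_hi]

lemma num_G3_lo : Gf (13/3 - 2*Real.sqrt 2) ((9 + Real.sqrt 2)/6) (1/4) N3E ((1 + Real.sqrt 2)/4) ≤ 0 := by
  simp only [Gf, N3E, S3E, S2E, C0E, Phi]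
  rw [hloghalf, Real.log_one, hinvb, hinvc]
  linarith [La_lb, La_ub, Lb_lb, Lb_ub, Lc_lb, Lc_ub, Ld_lb, Ld_ub, Lq_lb, Lq_ub,
    sqrt2_lo, sqrt2_hi, il2_lo, il2_hi, Real.log_two_gt_d9, Real.log_two_lt_d9,
    hs2, hl2il2, mLaIL2_lo, mLaIL2_hi, mLbIL2_lo, mLbIL2_hi, msLb_lo, msLb_hi,
    msLbIL2_lo, msLbIL2_hi, mLcIL2_lo, mLcIL2_hi, msLc_lo, msLc_hi,
    msLcIL2_lo, msLcIL2_hi, mLdIL2_lo, mLdIL2_hi, mLqIL2_lo, mLqIL2_hi]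

lemma num_G3_hi : Gf (13/3 - 2*Real.sqrt 2) ((9 + Real.sqrt 2)/6) (1/4) N3E ((2 + Real.sqrt 2)/4) ≤ 0 := by
  simp only [Gf, N3E, S3E, S2E, C0E, Phi]
  rw [hloghalf, Real.log_one, hinvb, hinvc]
  linarith [La_lb, La_ub, Lb_lb, Lb_ub, Lc_lb, Lc_ub, Ld_lb, Ld_ub, Lq_lb, Lq_ub,
    sqrt2_lo, sqrt2_hi, il2_lo, il2_hi, Real.log_two_gt_d9, Real.log_two_lt_d9,
    hs2, hl2il2, mLaIL2_lo, mLaIL2_hi, mLbIL2_lo, mLbIL2_hi, msLb_lo, msLb_hi,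
    msLbIL2_lo, msLbIL2_hi, mLcIL2_lo, mLcIL2_hi, msLc_lo, msLc_hi,
    msLcIL2_lo, msLcIL2_hi, mLdIL2_lo, mLdIL2_hi, mLqIL2_lo, mLqIL2_hi]

lemma num_G3p_hi : 0 ≤ Gf' (13/3 - 2*Real.sqrt 2) ((9 + Real.sqrt 2)/6) (1/4) ((2 + Real.sqrt 2)/4) := by
  simp only [Gf']
  rw [hinvc]
  nlinarith [La_lb, La_ub, Lb_lb, Lb_ub, Lc_lb, Lc_ub, Ld_lb, Ld_ub, Lq_lb, Lq_ub,
    sqrt2_lo, sqrt2_hi, il2_lo, il2_hi, Real.log_two_gt_d9, Real.log_two_lt_d9,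
    hs2, hl2il2, mLaIL2_lo, mLaIL2_hi, mLbIL2_lo, mLbIL2_hi, msLb_lo, msLb_hi,
    msLbIL2_lo, msLbIL2_hi, mLcIL2_lo, mLcIL2_hi, msLc_lo, msLc_hi,
    msLcIL2_lo, msLcIL2_hi, mLdIL2_lo, mLdIL2_hi, mLqIL2_lo, mLqIL2_hi]

lemma num_G4_lo : Gf (14/3 - 2*Real.sqrt 2) (13/6) (3/8) N4E ((2 + Real.sqrt 2)/4) ≤ 0 := by
  simp only [Gf, N4E, S4E, S3E, S2E, C0E, Phi]
  rw [hloghalf, Real.log_one, hinvb, hinvc]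
  linarith [La_lb, La_ub, Lb_lb, Lb_ub, Lc_lb, Lc_ub, Ld_lb, Ld_ub, Lq_lb, Lq_ub,
    sqrt2_lo, sqrt2_hi, il2_lo, il2_hi, Real.log_two_gt_d9, Real.log_two_lt_d9,
    hs2, hl2il2, mLaIL2_lo, mLaIL2_hi, mLbIL2_lo, mLbIL2_hi, msLb_lo, msLb_hi,
    msLbIL2_lo, msLbIL2_hi, mLcIL2_lo, mLcIL2_hi, msLc_lo, msLc_hi,
    msLcIL2_lo, msLcIL2_hi, mLdIL2_lo, mLdIL2_hi, mLqIL2_lo, mLqIL2_hi]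

lemma num_G4_hi : Gf (14/3 - 2*Real.sqrt 2) (13/6) (3/8) N4E (0.888 : ℝ) ≤ 0 := by
  simp only [Gf, N4E, S4E, S3E, S2E, C0E, Phi]
  rw [hloghalf, Real.log_one, hinvb, hinvc]
  linarith [La_lb, La_ub, Lb_lb, Lb_ub, Lc_lb, Lc_ub, Ld_lb, Ld_ub, Lq_lb, Lq_ub,
    sqrt2_lo, sqrt2_hi, il2_lo, il2_hi, Real.log_two_gt_d9, Real.log_two_lt_d9,
    hs2, hl2il2, mLaIL2_lo, mLaIL2_hi, mLbIL2_lo, mLbIL2_hi, msLb_lo, msLb_hi,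
    msLbIL2_lo, msLbIL2_hi, mLcIL2_lo, mLcIL2_hi, msLc_lo, msLc_hi,
    msLcIL2_lo, msLcIL2_hi, mLdIL2_lo, mLdIL2_hi, mLqIL2_lo, mLqIL2_hi]

lemma num_tan_lo : Gf 1 1 0 N5E (0.8983 : ℝ)
    + Gf' 1 1 0 (0.8983 : ℝ) * ((0.888 : ℝ) - 0.8983) ≤ 0 := by
  simp only [Gf, Gf', N5E, S5E, S4E, S3E, S2E, C0E, Phi]
  rw [hloghalf, Real.log_one, hinvb, hinvc]
  linarith [La_lb, La_ub, Lb_lb, Lb_ub, Lc_lb, Lc_ub, Ld_lb, Ld_ub, Lq_lb, Lq_ub,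
    sqrt2_lo, sqrt2_hi, il2_lo, il2_hi, Real.log_two_gt_d9, Real.log_two_lt_d9,
    hs2, hl2il2, mLaIL2_lo, mLaIL2_hi, mLbIL2_lo, mLbIL2_hi, msLb_lo, msLb_hi,
    msLbIL2_lo, msLbIL2_hi, mLcIL2_lo, mLcIL2_hi, msLc_lo, msLc_hi,
    msLcIL2_lo, msLcIL2_hi, mLdIL2_lo, mLdIL2_hi, mLqIL2_lo, mLqIL2_hi]

lemma num_tan_hi : Gf 1 1 0 N5E (0.8983 : ℝ)
    + Gf' 1 1 0 (0.8983 : ℝ) * ((1 : ℝ) - 0.8983) ≤ 0 := by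
  simp only [Gf, Gf', N5E, S5E, S4E, S3E, S2E, C0E, Phi]
  rw [hloghalf, Real.log_one, hinvb, hinvc]
  linarith [La_lb, La_ub, Lb_lb, Lb_ub, Lc_lb, Lc_ub, Ld_lb, Ld_ub, Lq_lb, Lq_ub,
    sqrt2_lo, sqrt2_hi, il2_lo, il2_hi, Real.log_two_gt_d9, Real.log_two_lt_d9,
    hs2, hl2il2, mLaIL2_lo, mLaIL2_hi, mLbIL2_lo, mLbIL2_hi, msLb_lo, msLb_hi,
    msLbIL2_lo, msLbIL2_hi, mLcIL2_lo, mLcIL2_hi, msLc_lo, msLc_hi,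
    msLcIL2_lo, msLcIL2_hi, mLdIL2_lo, mLdIL2_hi, mLqIL2_lo, mLqIL2_hi]
lemma piece1 : ∀ p ∈ Set.Icc (1/2 : ℝ) 0.5511, Gf 1 1 0 N1E p ≤ 0 := by
  intro p hp
  have hd : ∀ x ∈ Set.Icc (1/2:ℝ) 0.5511, HasDerivAt (Gf 1 1 0 N1E) (Gf' 1 1 0 x) x :=
    fun x hx => hasDerivAt_Gf (by linarith [hx.1])
  refine convex_max hd ?_ hp num_G1_lo num_G1_hi
  apply monoOn (fun x hx => hasDerivAt_Gf' (by linarith [hx.1]))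
  intro x hx
  simp only [Gf'']
  have hx0 : (0:ℝ) < x := by linarith [hx.1]
  have hxi : (0:ℝ) < x⁻¹ := inv_pos.mpr hx0
  have hxe : x * x⁻¹ = 1 := mul_inv_cancel₀ (ne_of_gt hx0)
  have hub : (1.8 : ℝ) ≤ x⁻¹ := by nlinarith [hx.2]
  have h1 : (Real.log 2)⁻¹ ≤ x⁻¹ := le_trans il2_hi (by linarith)
  nlinarith [mul_nonneg hxi.le (sub_nonneg.mpr h1)]

lemma piece2 : ∀ p ∈ Set.Icc (0.5511 : ℝ) ((1 + Real.sqrt 2)/4),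
    Gf (25/6 - 2*Real.sqrt 2) (19/12) (7/32) N2E p ≤ 0 := by
  intro p hp
  have hd : ∀ x ∈ Set.Icc (0.5511:ℝ) ((1 + Real.sqrt 2)/4),
      HasDerivAt (Gf (25/6 - 2*Real.sqrt 2) (19/12) (7/32) N2E)
        (Gf' (25/6 - 2*Real.sqrt 2) (19/12) (7/32) x) x :=
    fun x hx => hasDerivAt_Gf (by linarith [hx.1])
  have hanti : AntitoneOn (Gf' (25/6 - 2*Real.sqrt 2) (19/12) (7/32))
      (Set.Icc (0.5511:ℝ) ((1 + Real.sqrt 2)/4)) := by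
    apply antiOn (fun x hx => hasDerivAt_Gf' (by linarith [hx.1]))
    intro x hx
    simp only [Gf'']
    have hx0 : (0:ℝ) < x := by linarith [hx.1]
    have hxi : (0:ℝ) < x⁻¹ := inv_pos.mpr hx0
    have hphi : 0 ≤ (Real.log 2)⁻¹ - (19/12)*x⁻¹ + (7/16)*(x⁻¹*x⁻¹) := by
      nlinarith [sq_nonneg (x⁻¹ - 38/21), il2_lo]
    nlinarith [mul_nonneg hxi.le hphi]
  have hbmem : (1 + Real.sqrt 2)/4 ∈ Set.Icc (0.5511:ℝ) ((1 + Real.sqrt 2)/4) :=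
    ⟨by nlinarith [sqrt2_lo], le_rfl⟩
  have hmono : MonotoneOn (Gf (25/6 - 2*Real.sqrt 2) (19/12) (7/32) N2E)
      (Set.Icc (0.5511:ℝ) ((1 + Real.sqrt 2)/4)) := by
    apply monoOn hd
    intro x hx
    have := hanti (⟨hx.1.le, hx.2.le⟩ : x ∈ Set.Icc _ _) hbmem hx.2.le
    linarith [num_G2p_hi]
  calc Gf (25/6 - 2*Real.sqrt 2) (19/12) (7/32) N2E p
      ≤ Gf (25/6 - 2*Real.sqrt 2) (19/12) (7/32) N2E ((1 + Real.sqrt 2)/4) :=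
        hmono hp hbmem hp.2
    _ ≤ 0 := num_G2_hi

lemma quad_sign_le {u B w il2 : ℝ} (hw2 : w^2 = B^2 - 2*il2) (hw0 : 0 ≤ w) (h : u ≤ B - w) :
    0 ≤ il2 - B*u + (1/2)*(u*u) := by
  nlinarith [mul_nonneg (sub_nonneg.mpr h) (by linarith : (0:ℝ) ≤ B + w - u)]

lemma quad_sign_ge {u B w il2 : ℝ} (hw2 : w^2 = B^2 - 2*il2) (h1 : B - w ≤ u) (h2 : u ≤ B + w) :
    0 ≤ -il2 + B*u - (1/2)*(u*u) := by
  nlinarith [mul_nonneg (sub_nonneg.mpr h1) (sub_nonneg.mpr h2)]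

lemma cube_factor_le {v φ : ℝ} (hv : 0 ≤ v) (hφ : 0 ≤ φ) {g : ℝ} (hg : g = -(v*φ)) : g ≤ 0 := by
  nlinarith [mul_nonneg hv hφ]

set_option maxHeartbeats 1000000 in
lemma piece3 : ∀ p ∈ Set.Icc ((1 + Real.sqrt 2)/4) ((2 + Real.sqrt 2)/4),
    Gf (13/3 - 2*Real.sqrt 2) ((9 + Real.sqrt 2)/6) (1/4) N3E p ≤ 0 := by
  have hb0 : (0.6 : ℝ) < (1 + Real.sqrt 2)/4 := by nlinarith [sqrt2_lo]
  -- the inflection point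
  set w : ℝ := Real.sqrt (((9 + Real.sqrt 2)/6)^2 - 2*(Real.log 2)⁻¹) with hw
  have harg : (0:ℝ) ≤ ((9 + Real.sqrt 2)/6)^2 - 2*(Real.log 2)⁻¹ := by
    nlinarith [sqrt2_lo, il2_hi, hs2]
  have hw2 : w^2 = ((9 + Real.sqrt 2)/6)^2 - 2*(Real.log 2)⁻¹ := Real.sq_sqrt harg
  have hw0 : 0 ≤ w := Real.sqrt_nonneg _
  have harglo : (0.1225:ℝ) ≤ ((9 + Real.sqrt 2)/6)^2 - 2*(Real.log 2)⁻¹ := by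
    nlinarith [sqrt2_lo, il2_hi, hs2]
  have harghi : ((9 + Real.sqrt 2)/6)^2 - 2*(Real.log 2)⁻¹ ≤ (0.1296:ℝ) := by
    nlinarith [sqrt2_hi, il2_lo, hs2]
  have hw_lo : (0.35 : ℝ) ≤ w := by nlinarith [hw2, hw0, harglo]
  have hw_hi : w ≤ (0.36 : ℝ) := by nlinarith [hw2, hw0, harghi]
  set r : ℝ := ((9 + Real.sqrt 2)/6 - w)⁻¹ with hr
  have hru_lo : (1.3757 : ℝ) ≤ (9 + Real.sqrt 2)/6 - w := by nlinarith [sqrt2_lo]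
  have hru_hi : (9 + Real.sqrt 2)/6 - w ≤ (1.3858 : ℝ) := by nlinarith [sqrt2_hi]
  have hru0 : (0:ℝ) < (9 + Real.sqrt 2)/6 - w := by linarith
  have hr0 : (0:ℝ) < r := inv_pos.mpr hru0
  have hr_lo : (0.721 : ℝ) ≤ r := by
    have h := inv_anti₀ hru0 hru_hi
    rw [← hr] at h
    norm_num at h ⊢
    linarith
  have hr_hi : r ≤ (0.727 : ℝ) := by
    have h := inv_anti₀ (by norm_num : (0:ℝ) < 1.3757) hru_lo
    rw [← hr] at h
    norm_num at h ⊢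
    linarith
  have hbr : (1 + Real.sqrt 2)/4 ≤ r := by nlinarith [sqrt2_hi]
  have hrc : r ≤ (2 + Real.sqrt 2)/4 := by nlinarith [sqrt2_lo]
  have hrinv : r⁻¹ = (9 + Real.sqrt 2)/6 - w := by rw [hr, inv_inv]
  -- Gf'' ≤ 0 on (r, c)
  have hsign_anti : ∀ x ∈ Set.Ioo r ((2 + Real.sqrt 2)/4),
      Gf'' ((9 + Real.sqrt 2)/6) (1/4) x ≤ 0 := by
    intro x hx
    have hx0 : (0:ℝ) < x := lt_trans hr0 hx.1
    have hxi : (0:ℝ) ≤ x⁻¹ := (inv_pos.mpr hx0).le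
    have hu_hi : x⁻¹ ≤ (9 + Real.sqrt 2)/6 - w := by
      rw [← hrinv]; exact inv_anti₀ hr0 hx.1.le
    have hphi := quad_sign_le hw2 hw0 hu_hi
    refine cube_factor_le hxi hphi ?_
    simp only [Gf'']; ring
  -- Gf'' ≥ 0 on (b, r)
  have hsign_mono : ∀ x ∈ Set.Ioo ((1 + Real.sqrt 2)/4) r,
      0 ≤ Gf'' ((9 + Real.sqrt 2)/6) (1/4) x := by
    intro x hx
    have hx0 : (0:ℝ) < x := lt_trans (by linarith) hx.1
    have hxi : (0:ℝ) ≤ x⁻¹ := (inv_pos.mpr hx0).le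
    have hu_lo : (9 + Real.sqrt 2)/6 - w ≤ x⁻¹ := by
      rw [← hrinv]; exact inv_anti₀ hx0 hx.2.le
    have hu_hi0 : x⁻¹ ≤ 4*Real.sqrt 2 - 4 := by
      rw [← hinvb]; exact inv_anti₀ (by positivity) hx.1.le
    have hu_hi : x⁻¹ ≤ (9 + Real.sqrt 2)/6 + w := by nlinarith [sqrt2_lo, sqrt2_hi]
    have hphi := quad_sign_ge hw2 hu_lo hu_hi
    have : 0 ≤ x⁻¹ * (-(Real.log 2)⁻¹ + ((9 + Real.sqrt 2)/6)*x⁻¹ - (1/2)*(x⁻¹*x⁻¹)) :=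
      mul_nonneg hxi (by linarith)
    simp only [Gf'']
    nlinarith [this]
  intro p hp
  have hd : ∀ x ∈ Set.Icc ((1 + Real.sqrt 2)/4) ((2 + Real.sqrt 2)/4),
      HasDerivAt (Gf (13/3 - 2*Real.sqrt 2) ((9 + Real.sqrt 2)/6) (1/4) N3E)
        (Gf' (13/3 - 2*Real.sqrt 2) ((9 + Real.sqrt 2)/6) (1/4) x) x :=
    fun x hx => hasDerivAt_Gf (by linarith [hx.1])
  have hanti : AntitoneOn (Gf' (13/3 - 2*Real.sqrt 2) ((9 + Real.sqrt 2)/6) (1/4))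
      (Set.Icc r ((2 + Real.sqrt 2)/4)) := by
    apply antiOn (fun x hx => hasDerivAt_Gf' (by linarith [hx.1]))
    exact hsign_anti
  have hcmem : (2 + Real.sqrt 2)/4 ∈ Set.Icc r ((2 + Real.sqrt 2)/4) := ⟨hrc, le_rfl⟩
  have hmono_rc : MonotoneOn (Gf (13/3 - 2*Real.sqrt 2) ((9 + Real.sqrt 2)/6) (1/4) N3E)
      (Set.Icc r ((2 + Real.sqrt 2)/4)) := by
    apply monoOn (fun x hx => hasDerivAt_Gf (by linarith [hx.1]))
    intro x hx
    have := hanti (⟨hx.1.le, hx.2.le⟩ : x ∈ Set.Icc _ _) hcmem hx.2.le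
    linarith [num_G3p_hi]
  have hGr : Gf (13/3 - 2*Real.sqrt 2) ((9 + Real.sqrt 2)/6) (1/4) N3E r ≤ 0 :=
    le_trans (hmono_rc ⟨le_rfl, hrc⟩ hcmem hrc) num_G3_hi
  rcases le_total p r with hpr | hpr
  · have hd' : ∀ x ∈ Set.Icc ((1 + Real.sqrt 2)/4) r,
        HasDerivAt (Gf (13/3 - 2*Real.sqrt 2) ((9 + Real.sqrt 2)/6) (1/4) N3E)
          (Gf' (13/3 - 2*Real.sqrt 2) ((9 + Real.sqrt 2)/6) (1/4) x) x :=
      fun x hx => hasDerivAt_Gf (by linarith [hx.1])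
    refine convex_max hd' ?_ ⟨hp.1, hpr⟩ num_G3_lo hGr
    apply monoOn (fun x hx => hasDerivAt_Gf' (by linarith [hx.1]))
    exact hsign_mono
  · exact le_trans (hmono_rc ⟨hpr, hp.2⟩ hcmem hp.2) num_G3_hi

lemma piece4 : ∀ p ∈ Set.Icc ((2 + Real.sqrt 2)/4) (0.888 : ℝ),
    Gf (14/3 - 2*Real.sqrt 2) (13/6) (3/8) N4E p ≤ 0 := by
  intro p hp
  have hc0 : (0.85 : ℝ) < (2 + Real.sqrt 2)/4 := by nlinarith [sqrt2_lo]
  have hd : ∀ x ∈ Set.Icc ((2 + Real.sqrt 2)/4) (0.888:ℝ),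
      HasDerivAt (Gf (14/3 - 2*Real.sqrt 2) (13/6) (3/8) N4E)
        (Gf' (14/3 - 2*Real.sqrt 2) (13/6) (3/8) x) x :=
    fun x hx => hasDerivAt_Gf (by linarith [hx.1])
  refine convex_max hd ?_ hp num_G4_lo num_G4_hi
  apply monoOn (fun x hx => hasDerivAt_Gf' (by linarith [hx.1]))
  intro x hx
  simp only [Gf'']
  have hx0 : (0:ℝ) < x := by linarith [hx.1]
  have hxi : (0:ℝ) < x⁻¹ := inv_pos.mpr hx0
  have hxe : x * x⁻¹ = 1 := mul_inv_cancel₀ (ne_of_gt hx0)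
  have hu_lo : (1.126 : ℝ) ≤ x⁻¹ := by nlinarith [hx.2]
  have hu_hi : x⁻¹ ≤ (1.1716 : ℝ) := by
    have h := inv_anti₀ (by positivity : (0:ℝ) < (2 + Real.sqrt 2)/4) hx.1.le
    rw [hinvc] at h
    nlinarith [sqrt2_lo]
  have hphi : 0 ≤ -(Real.log 2)⁻¹ + (13/6)*x⁻¹ - (3/4)*(x⁻¹*x⁻¹) := by
    nlinarith [mul_nonneg (sub_nonneg.mpr hu_lo) (sub_nonneg.mpr hu_hi), il2_hi]
  nlinarith [mul_nonneg hxi.le hphi]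

lemma piece5 : ∀ p ∈ Set.Icc (0.888 : ℝ) 1, Gf 1 1 0 N5E p ≤ 0 := by
  intro p hp
  have hd : ∀ x ∈ Set.Icc (0.888:ℝ) 1, HasDerivAt (Gf 1 1 0 N5E) (Gf' 1 1 0 x) x :=
    fun x hx => hasDerivAt_Gf (by linarith [hx.1])
  have hanti : AntitoneOn (Gf' 1 1 0) (Set.Icc (0.888:ℝ) 1) := by
    apply antiOn (fun x hx => hasDerivAt_Gf' (by linarith [hx.1]))
    intro x hx
    simp only [Gf'']
    have hx0 : (0:ℝ) < x := by linarith [hx.1]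
    have hxi : (0:ℝ) < x⁻¹ := inv_pos.mpr hx0
    have hxe : x * x⁻¹ = 1 := mul_inv_cancel₀ (ne_of_gt hx0)
    have hu_hi : x⁻¹ ≤ (1.127 : ℝ) := by nlinarith [hx.1]
    have h1 : x⁻¹ ≤ (Real.log 2)⁻¹ := le_trans hu_hi (by linarith [il2_lo])
    nlinarith [mul_nonneg hxi.le (sub_nonneg.mpr h1)]
  exact concave_tangent hd hanti (by norm_num) hp num_tan_lo num_tan_hi
set_option maxHeartbeats 1000000 in
/-- The per-step cost function `D` of (1,2)Insertion integrates to a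
linear-term coefficient at most `-1.40118` for every `p ∈ (1/2, 1]`. -/
theorem twelveInsertion_linear_coefficient (D : ℝ → ℝ)
    (h1 : ∀ x ∈ Set.Ioc (1/2 : ℝ) 0.5511, D x = 1 - 1/x)
    (h2 : ∀ x ∈ Set.Ioc (0.5511 : ℝ) ((1 + Real.sqrt 2)/4),
      D x = 25/6 - 2*Real.sqrt 2 - 19/(12*x) + 7/(32*x^2))
    (h3 : ∀ x ∈ Set.Ioc ((1 + Real.sqrt 2)/4) ((2 + Real.sqrt 2)/4),
      D x = 13/3 - 2*Real.sqrt 2 - (9 + Real.sqrt 2)/(6*x) + 1/(4*x^2))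
    (h4 : ∀ x ∈ Set.Ioc ((2 + Real.sqrt 2)/4) (0.888 : ℝ),
      D x = 14/3 - 2*Real.sqrt 2 - 13/(6*x) + 3/(8*x^2))
    (h5 : ∀ x ∈ Set.Ioc (0.888 : ℝ) 1, D x = 1 - 1/x) :
    ∀ p ∈ Set.Ioc (1/2 : ℝ) 1,
      -Real.logb 2 p
        + (1/p) * (-1 + (∫ x in (1/2 : ℝ)..1, D x) + ∫ x in (1/2 : ℝ)..p, D x)
      ≤ -1.40118 := by
  intro p hp
  have hs_lo := sqrt2_lo
  have hs_hi := sqrt2_hi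
  have hab : (0.5511:ℝ) < (1 + Real.sqrt 2)/4 := by nlinarith
  have hb_pos : (0:ℝ) < (1 + Real.sqrt 2)/4 := by positivity
  have hc_pos : (0:ℝ) < (2 + Real.sqrt 2)/4 := by positivity
  have hbne : ((1 + Real.sqrt 2)/4 : ℝ) ≠ 0 := ne_of_gt hb_pos
  have hcne : ((2 + Real.sqrt 2)/4 : ℝ) ≠ 0 := ne_of_gt hc_pos
  have hbc : (1 + Real.sqrt 2)/4 < (2 + Real.sqrt 2)/4 := by linarith
  have hcd : (2 + Real.sqrt 2)/4 < (0.888:ℝ) := by nlinarith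
  have hp0 : (0:ℝ) < p := lt_trans (by norm_num) hp.1
  have hpne : p ≠ 0 := ne_of_gt hp0
  have hl2ne : Real.log 2 ≠ 0 := ne_of_gt hl2pos
  have h1' : ∀ x ∈ Set.Ioc (1/2:ℝ) 0.5511, D x = 1 - 1*x⁻¹ + 0*(x⁻¹*x⁻¹) :=
    fun x hx => by rw [h1 x hx]; ring
  have h2' : ∀ x ∈ Set.Ioc (0.5511:ℝ) ((1 + Real.sqrt 2)/4),
      D x = (25/6 - 2*Real.sqrt 2) - (19/12)*x⁻¹ + (7/32)*(x⁻¹*x⁻¹) :=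
    fun x hx => by rw [h2 x hx]; ring
  have h3' : ∀ x ∈ Set.Ioc ((1 + Real.sqrt 2)/4) ((2 + Real.sqrt 2)/4),
      D x = (13/3 - 2*Real.sqrt 2) - ((9 + Real.sqrt 2)/6)*x⁻¹ + (1/4)*(x⁻¹*x⁻¹) :=
    fun x hx => by rw [h3 x hx]; ring
  have h4' : ∀ x ∈ Set.Ioc ((2 + Real.sqrt 2)/4) (0.888:ℝ),
      D x = (14/3 - 2*Real.sqrt 2) - (13/6)*x⁻¹ + (3/8)*(x⁻¹*x⁻¹) :=
    fun x hx => by rw [h4 x hx]; ring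
  have h5' : ∀ x ∈ Set.Ioc (0.888:ℝ) 1, D x = 1 - 1*x⁻¹ + 0*(x⁻¹*x⁻¹) :=
    fun x hx => by rw [h5 x hx]; ring
  have i1 : IntervalIntegrable D MeasureTheory.volume (1/2) 0.5511 :=
    intervalIntegrable_piece (by norm_num) (by norm_num) h1'
  have i2 : IntervalIntegrable D MeasureTheory.volume 0.5511 ((1 + Real.sqrt 2)/4) :=
    intervalIntegrable_piece (by norm_num) hab.le h2'
  have i3 : IntervalIntegrable D MeasureTheory.volume ((1 + Real.sqrt 2)/4) ((2 + Real.sqrt 2)/4) :=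
    intervalIntegrable_piece hb_pos hbc.le h3'
  have i4 : IntervalIntegrable D MeasureTheory.volume ((2 + Real.sqrt 2)/4) 0.888 :=
    intervalIntegrable_piece hc_pos hcd.le h4'
  have i5 : IntervalIntegrable D MeasureTheory.volume 0.888 1 :=
    intervalIntegrable_piece (by norm_num) (by norm_num) h5'
  have I1 : ∫ x in (1/2:ℝ)..0.5511, D x = Phi 1 1 0 0.5511 - Phi 1 1 0 (1/2) :=
    integral_piece (by norm_num) (by norm_num) h1'
  have I2 : ∫ x in (0.5511:ℝ)..((1 + Real.sqrt 2)/4), D x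
      = Phi (25/6 - 2*Real.sqrt 2) (19/12) (7/32) ((1 + Real.sqrt 2)/4)
        - Phi (25/6 - 2*Real.sqrt 2) (19/12) (7/32) 0.5511 :=
    integral_piece (by norm_num) hab.le h2'
  have I3 : ∫ x in ((1 + Real.sqrt 2)/4 : ℝ)..((2 + Real.sqrt 2)/4), D x
      = Phi (13/3 - 2*Real.sqrt 2) ((9 + Real.sqrt 2)/6) (1/4) ((2 + Real.sqrt 2)/4)
        - Phi (13/3 - 2*Real.sqrt 2) ((9 + Real.sqrt 2)/6) (1/4) ((1 + Real.sqrt 2)/4) :=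
    integral_piece hb_pos hbc.le h3'
  have I4 : ∫ x in ((2 + Real.sqrt 2)/4 : ℝ)..0.888, D x
      = Phi (14/3 - 2*Real.sqrt 2) (13/6) (3/8) 0.888
        - Phi (14/3 - 2*Real.sqrt 2) (13/6) (3/8) ((2 + Real.sqrt 2)/4) :=
    integral_piece hc_pos hcd.le h4'
  have I5 : ∫ x in (0.888:ℝ)..1, D x = Phi 1 1 0 1 - Phi 1 1 0 0.888 :=
    integral_piece (by norm_num) (by norm_num) h5'
  have hC0 : (∫ x in (1/2:ℝ)..1, D x) = C0E := by
    rw [← intervalIntegral.integral_add_adjacent_intervals i1 (i2.trans (i3.trans (i4.trans i5))),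
        ← intervalIntegral.integral_add_adjacent_intervals i2 (i3.trans (i4.trans i5)),
        ← intervalIntegral.integral_add_adjacent_intervals i3 (i4.trans i5),
        ← intervalIntegral.integral_add_adjacent_intervals i4 i5,
        I1, I2, I3, I4, I5]
    simp only [C0E]
    ring
  rw [hC0]
  rcases le_or_gt p 0.5511 with hA | hA
  · -- piece 1
    have hF : (∫ x in (1/2:ℝ)..p, D x) = Phi 1 1 0 p - Phi 1 1 0 (1/2) :=
      integral_piece (by norm_num) hp.1.le (fun x hx => h1' x ⟨hx.1, hx.2.trans hA⟩)
    rw [hF]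
    have hG : Gf 1 1 0 N1E p ≤ 0 := piece1 p ⟨hp.1.le, hA⟩
    have hG' : Gf 1 1 0 N1E p * p⁻¹ ≤ 0 := by
      have := mul_le_mul_of_nonneg_right hG (inv_nonneg.mpr hp0.le)
      simpa using this
    have hkey : (-Real.logb 2 p + 1/p * (-1 + C0E + (Phi 1 1 0 p - Phi 1 1 0 (1/2))))
        + 1.40118 = Gf 1 1 0 N1E p * p⁻¹ := by
      simp only [Gf, N1E, Phi, Real.logb]
      field_simp
      ring
    linarith [hkey, hG']
  rcases le_or_gt p ((1 + Real.sqrt 2)/4) with hB | hB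
  · -- piece 2
    have ip : IntervalIntegrable D MeasureTheory.volume 0.5511 p :=
      intervalIntegrable_piece (by norm_num) hA.le (fun x hx => h2' x ⟨hx.1, hx.2.trans hB⟩)
    have htail : ∫ x in (0.5511:ℝ)..p, D x
        = Phi (25/6 - 2*Real.sqrt 2) (19/12) (7/32) p
          - Phi (25/6 - 2*Real.sqrt 2) (19/12) (7/32) 0.5511 :=
      integral_piece (by norm_num) hA.le (fun x hx => h2' x ⟨hx.1, hx.2.trans hB⟩)
    rw [← intervalIntegral.integral_add_adjacent_intervals i1 ip, I1, htail]
    have hG : Gf (25/6 - 2*Real.sqrt 2) (19/12) (7/32) N2E p ≤ 0 := piece2 p ⟨hA.le, hB⟩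
    have hG' : Gf (25/6 - 2*Real.sqrt 2) (19/12) (7/32) N2E p * p⁻¹ ≤ 0 := by
      have := mul_le_mul_of_nonneg_right hG (inv_nonneg.mpr hp0.le)
      simpa using this
    have hkey : (-Real.logb 2 p + 1/p * (-1 + C0E + ((Phi 1 1 0 0.5511 - Phi 1 1 0 (1/2))
          + (Phi (25/6 - 2*Real.sqrt 2) (19/12) (7/32) p
            - Phi (25/6 - 2*Real.sqrt 2) (19/12) (7/32) 0.5511))))
        + 1.40118 = Gf (25/6 - 2*Real.sqrt 2) (19/12) (7/32) N2E p * p⁻¹ := by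
      simp only [Gf, N2E, S2E, Phi, Real.logb]
      field_simp
      ring
    linarith [hkey, hG']
  rcases le_or_gt p ((2 + Real.sqrt 2)/4) with hC | hC
  · -- piece 3
    have ip : IntervalIntegrable D MeasureTheory.volume ((1 + Real.sqrt 2)/4) p :=
      intervalIntegrable_piece hb_pos hB.le (fun x hx => h3' x ⟨hx.1, hx.2.trans hC⟩)
    have htail : ∫ x in ((1 + Real.sqrt 2)/4 : ℝ)..p, D x
        = Phi (13/3 - 2*Real.sqrt 2) ((9 + Real.sqrt 2)/6) (1/4) p
          - Phi (13/3 - 2*Real.sqrt 2) ((9 + Real.sqrt 2)/6) (1/4) ((1 + Real.sqrt 2)/4) :=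
      integral_piece hb_pos hB.le (fun x hx => h3' x ⟨hx.1, hx.2.trans hC⟩)
    rw [← intervalIntegral.integral_add_adjacent_intervals (i1.trans i2) ip,
        ← intervalIntegral.integral_add_adjacent_intervals i1 i2, I1, I2, htail]
    have hG : Gf (13/3 - 2*Real.sqrt 2) ((9 + Real.sqrt 2)/6) (1/4) N3E p ≤ 0 :=
      piece3 p ⟨hB.le, hC⟩
    have hG' : Gf (13/3 - 2*Real.sqrt 2) ((9 + Real.sqrt 2)/6) (1/4) N3E p * p⁻¹ ≤ 0 := by
      have := mul_le_mul_of_nonneg_right hG (inv_nonneg.mpr hp0.le)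
      simpa using this
    have hkey : (-Real.logb 2 p + 1/p * (-1 + C0E + ((Phi 1 1 0 0.5511 - Phi 1 1 0 (1/2))
          + (Phi (25/6 - 2*Real.sqrt 2) (19/12) (7/32) ((1 + Real.sqrt 2)/4)
            - Phi (25/6 - 2*Real.sqrt 2) (19/12) (7/32) 0.5511)
          + (Phi (13/3 - 2*Real.sqrt 2) ((9 + Real.sqrt 2)/6) (1/4) p
            - Phi (13/3 - 2*Real.sqrt 2) ((9 + Real.sqrt 2)/6) (1/4) ((1 + Real.sqrt 2)/4)))))
        + 1.40118 = Gf (13/3 - 2*Real.sqrt 2) ((9 + Real.sqrt 2)/6) (1/4) N3E p * p⁻¹ := by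
      simp only [Gf, N3E, S3E, S2E, Phi, Real.logb]
      field_simp
      ring
    linarith [hkey, hG']
  rcases le_or_gt p 0.888 with hD | hD
  · -- piece 4
    have ip : IntervalIntegrable D MeasureTheory.volume ((2 + Real.sqrt 2)/4) p :=
      intervalIntegrable_piece hc_pos hC.le (fun x hx => h4' x ⟨hx.1, hx.2.trans hD⟩)
    have htail : ∫ x in ((2 + Real.sqrt 2)/4 : ℝ)..p, D x
        = Phi (14/3 - 2*Real.sqrt 2) (13/6) (3/8) p
          - Phi (14/3 - 2*Real.sqrt 2) (13/6) (3/8) ((2 + Real.sqrt 2)/4) :=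
      integral_piece hc_pos hC.le (fun x hx => h4' x ⟨hx.1, hx.2.trans hD⟩)
    rw [← intervalIntegral.integral_add_adjacent_intervals ((i1.trans i2).trans i3) ip,
        ← intervalIntegral.integral_add_adjacent_intervals (i1.trans i2) i3,
        ← intervalIntegral.integral_add_adjacent_intervals i1 i2, I1, I2, I3, htail]
    have hG : Gf (14/3 - 2*Real.sqrt 2) (13/6) (3/8) N4E p ≤ 0 := piece4 p ⟨hC.le, hD⟩
    have hG' : Gf (14/3 - 2*Real.sqrt 2) (13/6) (3/8) N4E p * p⁻¹ ≤ 0 := by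
      have := mul_le_mul_of_nonneg_right hG (inv_nonneg.mpr hp0.le)
      simpa using this
    have hkey : (-Real.logb 2 p + 1/p * (-1 + C0E + ((Phi 1 1 0 0.5511 - Phi 1 1 0 (1/2))
          + (Phi (25/6 - 2*Real.sqrt 2) (19/12) (7/32) ((1 + Real.sqrt 2)/4)
            - Phi (25/6 - 2*Real.sqrt 2) (19/12) (7/32) 0.5511)
          + (Phi (13/3 - 2*Real.sqrt 2) ((9 + Real.sqrt 2)/6) (1/4) ((2 + Real.sqrt 2)/4)
            - Phi (13/3 - 2*Real.sqrt 2) ((9 + Real.sqrt 2)/6) (1/4) ((1 + Real.sqrt 2)/4))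
          + (Phi (14/3 - 2*Real.sqrt 2) (13/6) (3/8) p
            - Phi (14/3 - 2*Real.sqrt 2) (13/6) (3/8) ((2 + Real.sqrt 2)/4)))))
        + 1.40118 = Gf (14/3 - 2*Real.sqrt 2) (13/6) (3/8) N4E p * p⁻¹ := by
      simp only [Gf, N4E, S4E, S3E, S2E, Phi, Real.logb]
      field_simp
      ring
    linarith [hkey, hG']
  · -- piece 5
    have ip : IntervalIntegrable D MeasureTheory.volume 0.888 p :=
      intervalIntegrable_piece (by norm_num) hD.le (fun x hx => h5' x ⟨hx.1, hx.2.trans hp.2⟩)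
    have htail : ∫ x in (0.888:ℝ)..p, D x = Phi 1 1 0 p - Phi 1 1 0 0.888 :=
      integral_piece (by norm_num) hD.le (fun x hx => h5' x ⟨hx.1, hx.2.trans hp.2⟩)
    rw [← intervalIntegral.integral_add_adjacent_intervals (((i1.trans i2).trans i3).trans i4) ip,
        ← intervalIntegral.integral_add_adjacent_intervals ((i1.trans i2).trans i3) i4,
        ← intervalIntegral.integral_add_adjacent_intervals (i1.trans i2) i3,
        ← intervalIntegral.integral_add_adjacent_intervals i1 i2, I1, I2, I3, I4, htail]
    have hG : Gf 1 1 0 N5E p ≤ 0 := piece5 p ⟨hD.le, hp.2⟩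
    have hG' : Gf 1 1 0 N5E p * p⁻¹ ≤ 0 := by
      have := mul_le_mul_of_nonneg_right hG (inv_nonneg.mpr hp0.le)
      simpa using this
    have hkey : (-Real.logb 2 p + 1/p * (-1 + C0E + ((Phi 1 1 0 0.5511 - Phi 1 1 0 (1/2))
          + (Phi (25/6 - 2*Real.sqrt 2) (19/12) (7/32) ((1 + Real.sqrt 2)/4)
            - Phi (25/6 - 2*Real.sqrt 2) (19/12) (7/32) 0.5511)
          + (Phi (13/3 - 2*Real.sqrt 2) ((9 + Real.sqrt 2)/6) (1/4) ((2 + Real.sqrt 2)/4)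
            - Phi (13/3 - 2*Real.sqrt 2) ((9 + Real.sqrt 2)/6) (1/4) ((1 + Real.sqrt 2)/4))
          + (Phi (14/3 - 2*Real.sqrt 2) (13/6) (3/8) 0.888
            - Phi (14/3 - 2*Real.sqrt 2) (13/6) (3/8) ((2 + Real.sqrt 2)/4))
          + (Phi 1 1 0 p - Phi 1 1 0 0.888))))
        + 1.40118 = Gf 1 1 0 N5E p * p⁻¹ := by
      simp only [Gf, N5E, S5E, S4E, S3E, S2E, Phi, Real.logb]
      field_simp
      ring
    linarith [hkey, hG']
end

section
/- Let D* : (1/2, 1] → ℝ be the piecewise function D*(x) = 1 − 1/x for x ∈ (1/2, 3/4 − √6/12] ∪ (3/4 + √3/12, 1]; D*(x) = 3/2 − 7/(4x) + 25/(96x²) for x ∈ (3/4 − √6/12, 3/4]; D*(x) = 2 − 5/(2x) + 13/(24x²) for x ∈ (3/4, 3/4 + √3/12]. Then for every p ∈ (1/2, 1], −log₂ p + (1/p)·(−1 + ∫_{1/2}^{1} D*(x) dx + ∫_{1/2}^{p} D*(x) dx) ≤ −1.4034. -/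
/-- Quintic artanh-type upper bound for the logarithm. -/
lemma log_le_artanh5 (y : ℝ) (hy : 1 ≤ y) :
    Real.log y ≤ 2*(y-1)/(y+1) + (2/3)*((y-1)/(y+1))^3 + (y-1)^5/(10*y*(y+1)^3) := by
  set f : ℝ → ℝ := fun x => 2*(x-1)/(x+1) + (2/3)*((x-1)/(x+1))^3 + (x-1)^5/(10*x*(x+1)^3) - Real.log x with hf
  have key : ∀ x ∈ Set.Ici (1:ℝ), 0 ≤ f x := by
    have hmono : MonotoneOn f (Set.Ici (1:ℝ)) := by
      have hderiv : ∀ x ∈ Set.Ioi (1:ℝ), HasDerivAt f ((x-1)^6/(10*x^2*(x+1)^4)) x := by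
        intro x hx
        have hx1 : (1:ℝ) < x := hx
        have hx0 : x ≠ 0 := by positivity
        have hx0' : (0:ℝ) < x := by linarith
        have hxp1 : x + 1 ≠ 0 := by positivity
        have h1 : HasDerivAt (fun x : ℝ => 2*(x-1)/(x+1))
            ((2*(x+1) - (2*(x-1)))/(x+1)^2) x := by
          simpa [Pi.div_def] using (((hasDerivAt_id x).sub_const 1).const_mul 2).div
            ((hasDerivAt_id x).add_const 1) hxp1
        have h2 : HasDerivAt (fun x : ℝ => (x-1)/(x+1))
            (((x+1) - (x-1))/(x+1)^2) x := by
          simpa [Pi.div_def] using ((hasDerivAt_id x).sub_const 1).div ((hasDerivAt_id x).add_const 1) hxp1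
        have h3 : HasDerivAt (fun x : ℝ => (2/3)*((x-1)/(x+1))^3)
            ((2/3)*(3*((x-1)/(x+1))^2 * (((x+1) - (x-1))/(x+1)^2))) x := by
          simpa using (h2.pow 3).const_mul (2/3 : ℝ)
        have hden : HasDerivAt (fun x : ℝ => 10*x*(x+1)^3)
            (10*(x+1)^3 + 10*x*(3*(x+1)^2)) x := by
          have := ((hasDerivAt_id x).const_mul (10:ℝ)).mul (((hasDerivAt_id x).add_const 1).pow 3)
          simpa [Pi.mul_def, Pi.pow_def] using this
        have hnum : HasDerivAt (fun x : ℝ => (x-1)^5) (5*(x-1)^4) x := by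
          simpa [Pi.pow_def] using ((hasDerivAt_id x).sub_const 1).pow 5
        have hden0 : 10*x*(x+1)^3 ≠ 0 := by positivity
        have h4 : HasDerivAt (fun x : ℝ => (x-1)^5/(10*x*(x+1)^3))
            ((5*(x-1)^4*(10*x*(x+1)^3) - (x-1)^5*(10*(x+1)^3 + 10*x*(3*(x+1)^2)))/(10*x*(x+1)^3)^2) x :=
          hnum.div hden hden0
        have h5 : HasDerivAt Real.log (1/x) x := by
          simpa [one_div] using Real.hasDerivAt_log hx0
        have := ((h1.add h3).add h4).sub h5
        exact this.congr_deriv (by field_simp; ring)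
      apply monotoneOn_of_deriv_nonneg (convex_Ici 1)
      · apply ContinuousOn.sub
        · apply ContinuousOn.add
          apply ContinuousOn.add
          · exact (continuousOn_const.mul (continuousOn_id.sub continuousOn_const)).div
              (continuousOn_id.add continuousOn_const) (fun x hx => by
                have : (1:ℝ) ≤ x := hx; positivity)
          · exact continuousOn_const.mul
              (((continuousOn_id.sub continuousOn_const).div
                (continuousOn_id.add continuousOn_const) (fun x hx => by
                  have : (1:ℝ) ≤ x := hx; simp only [Pi.add_apply, id]; positivity)).pow 3)
          · exact ((continuousOn_id.sub continuousOn_const).pow 5).div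
              ((continuousOn_const.mul continuousOn_id).mul
                ((continuousOn_id.add continuousOn_const).pow 3)) (fun x hx => by
                have : (1:ℝ) ≤ x := hx; positivity)
        · exact Real.continuousOn_log.mono (fun x hx => by
            have : (1:ℝ) ≤ x := hx; simp; positivity)
      · intro x hx
        rw [interior_Ici] at hx
        exact ((hderiv x hx).differentiableAt).differentiableWithinAt
      · intro x hx
        rw [interior_Ici] at hx
        rw [(hderiv x hx).deriv]
        have hx1 : (1:ℝ) < x := hx
        positivity
    have h0 : f 1 = 0 := by norm_num [hf]
    intro x hx
    have := hmono (Set.self_mem_Ici) hx hx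
    rw [h0] at this
    exact this
  have := key y hy
  simp only [hf] at this
  linarith

lemma sqrt6_lt : Real.sqrt 6 < 2.4494897428 := by
  rw [show (2.4494897428:ℝ) = Real.sqrt (2.4494897428^2) by
    rw [Real.sqrt_sq (by norm_num)]]
  exact Real.sqrt_lt_sqrt (by norm_num) (by norm_num)

lemma sqrt6_gt : 2.4494897427 < Real.sqrt 6 := by
  rw [show (2.4494897427:ℝ) = Real.sqrt (2.4494897427^2) by
    rw [Real.sqrt_sq (by norm_num)]]
  exact Real.sqrt_lt_sqrt (by norm_num) (by norm_num)

lemma sqrt3_lt : Real.sqrt 3 < 1.7320508076 := by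
  rw [show (1.7320508076:ℝ) = Real.sqrt (1.7320508076^2) by
    rw [Real.sqrt_sq (by norm_num)]]
  exact Real.sqrt_lt_sqrt (by norm_num) (by norm_num)

lemma sqrt3_gt : 1.7320508075 < Real.sqrt 3 := by
  rw [show (1.7320508075:ℝ) = Real.sqrt (1.7320508075^2) by
    rw [Real.sqrt_sq (by norm_num)]]
  exact Real.sqrt_lt_sqrt (by norm_num) (by norm_num)

lemma LA_lt : Real.log (3/4 - Real.sqrt 6/12) < -0.6053637009 := by
  have hA : (3/4 - Real.sqrt 6/12 : ℝ) ≤ 0.5458758548 := by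
    have := sqrt6_gt; norm_num at this ⊢; linarith
  have hApos : (0:ℝ) < 3/4 - Real.sqrt 6/12 := by
    have := sqrt6_lt; norm_num at this ⊢; linarith
  have h1 : Real.log (3/4 - Real.sqrt 6/12) ≤ Real.log 0.5458758548 :=
    Real.log_le_log hApos hA
  have h2 : Real.log 0.5458758548 = Real.log 1.0917517096 - Real.log 2 := by
    rw [← Real.log_div (by norm_num) (by norm_num)]; norm_num
  have h3 := log_le_artanh5 1.0917517096 (by norm_num)
  have h4 := Real.log_two_gt_d9
  norm_num at h1 h2 h3 h4 ⊢
  rw [h2] at h1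
  linarith

lemma LB_lt : Real.log (3/4) < -0.2876820721 := by
  have h2 : Real.log (9/16 : ℝ) = Real.log (9/8) - Real.log 2 := by
    rw [← Real.log_div (by norm_num) (by norm_num)]; norm_num
  have h5 : Real.log (9/16 : ℝ) = 2 * Real.log (3/4) := by
    rw [show (9/16:ℝ) = (3/4)^2 by norm_num, Real.log_pow]; push_cast; ring
  have h3 := log_le_artanh5 (9/8) (by norm_num)
  have h4 := Real.log_two_gt_d9
  norm_num at h3 h4 ⊢
  linarith

lemma LC_gt : -0.1116719834 < Real.log (3/4 + Real.sqrt 3/12) := by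
  have hC : (0.8943375672:ℝ) ≤ 3/4 + Real.sqrt 3/12 := by
    have := sqrt3_gt; norm_num at this ⊢; linarith
  have h1 : Real.log 0.8943375672 ≤ Real.log (3/4 + Real.sqrt 3/12) :=
    Real.log_le_log (by norm_num) hC
  have h2 : Real.log (1117921959/1250000000 : ℝ) = - Real.log (1250000000/1117921959) := by
    rw [← Real.log_inv]
    norm_num
  have h3 := log_le_artanh5 (1250000000/1117921959) (by norm_num)
  norm_num at h1 h3 ⊢
  rw [h2] at h1
  linarith

section Integrals

lemma intble1 (u v : ℝ) (hu : 0 < u) (huv : u ≤ v) :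
    IntervalIntegrable (fun x : ℝ => 1 - 1/x) MeasureTheory.volume u v := by
  apply ContinuousOn.intervalIntegrable
  apply continuousOn_const.sub
  apply continuousOn_const.div continuousOn_id
  intro x hx
  rw [Set.uIcc_of_le huv] at hx
  exact ne_of_gt (lt_of_lt_of_le hu hx.1)

lemma intble2 (u v : ℝ) (hu : 0 < u) (huv : u ≤ v) :
    IntervalIntegrable (fun x : ℝ => 3/2 - 7/(4*x) + 25/(96*x^2)) MeasureTheory.volume u v := by
  apply ContinuousOn.intervalIntegrable
  apply ContinuousOn.add
  · apply continuousOn_const.sub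
    apply continuousOn_const.div (continuousOn_const.mul continuousOn_id)
    intro x hx
    rw [Set.uIcc_of_le huv] at hx
    have := lt_of_lt_of_le hu hx.1; simp only [Pi.mul_apply, Pi.pow_apply, id]; positivity
  · apply continuousOn_const.div (continuousOn_const.mul (continuousOn_id.pow 2))
    intro x hx
    rw [Set.uIcc_of_le huv] at hx
    have := lt_of_lt_of_le hu hx.1; simp only [Pi.mul_apply, Pi.pow_apply, id]; positivity

lemma intble3 (u v : ℝ) (hu : 0 < u) (huv : u ≤ v) :
    IntervalIntegrable (fun x : ℝ => 2 - 5/(2*x) + 13/(24*x^2)) MeasureTheory.volume u v := by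
  apply ContinuousOn.intervalIntegrable
  apply ContinuousOn.add
  · apply continuousOn_const.sub
    apply continuousOn_const.div (continuousOn_const.mul continuousOn_id)
    intro x hx
    rw [Set.uIcc_of_le huv] at hx
    have := lt_of_lt_of_le hu hx.1; simp only [Pi.mul_apply, Pi.pow_apply, id]; positivity
  · apply continuousOn_const.div (continuousOn_const.mul (continuousOn_id.pow 2))
    intro x hx
    rw [Set.uIcc_of_le huv] at hx
    have := lt_of_lt_of_le hu hx.1; simp only [Pi.mul_apply, Pi.pow_apply, id]; positivity

open intervalIntegral in
lemma int_piece1 (u v : ℝ) (hu : 0 < u) (huv : u ≤ v) :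
    ∫ x in u..v, (1 - 1/x) = (v - Real.log v) - (u - Real.log u) := by
  apply integral_eq_sub_of_hasDerivAt
  · intro x hx
    rw [Set.uIcc_of_le huv] at hx
    have hx0 : 0 < x := lt_of_lt_of_le hu hx.1
    exact (hasDerivAt_id x).sub ((Real.hasDerivAt_log (ne_of_gt hx0)).congr_deriv (by rw [one_div]))
  · exact intble1 u v hu huv

open intervalIntegral in
lemma int_piece2 (u v : ℝ) (hu : 0 < u) (huv : u ≤ v) :
    ∫ x in u..v, (3/2 - 7/(4*x) + 25/(96*x^2)) =
      (3/2*v - 7/4*Real.log v - 25/(96*v)) - (3/2*u - 7/4*Real.log u - 25/(96*u)) := by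
  apply integral_eq_sub_of_hasDerivAt
  · intro x hx
    rw [Set.uIcc_of_le huv] at hx
    have hx0 : 0 < x := lt_of_lt_of_le hu hx.1
    have hx0' : x ≠ 0 := ne_of_gt hx0
    have h1 : HasDerivAt (fun x : ℝ => 3/2*x - 7/4*Real.log x - 25/(96*x))
        (3/2 - 7/4*(1/x) - (0*(96*x) - 25*(96*1))/(96*x)^2) x := by
      simpa [id, Pi.div_def, Pi.sub_def] using (((hasDerivAt_id x).const_mul (3/2)).sub
        ((Real.hasDerivAt_log hx0').const_mul (7/4))).sub
        ((hasDerivAt_const x 25).div ((hasDerivAt_id x).const_mul 96) (by positivity))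
    exact h1.congr_deriv (by field_simp; ring)
  · exact intble2 u v hu huv

open intervalIntegral in
lemma int_piece3 (u v : ℝ) (hu : 0 < u) (huv : u ≤ v) :
    ∫ x in u..v, (2 - 5/(2*x) + 13/(24*x^2)) =
      (2*v - 5/2*Real.log v - 13/(24*v)) - (2*u - 5/2*Real.log u - 13/(24*u)) := by
  apply integral_eq_sub_of_hasDerivAt
  · intro x hx
    rw [Set.uIcc_of_le huv] at hx
    have hx0 : 0 < x := lt_of_lt_of_le hu hx.1
    have hx0' : x ≠ 0 := ne_of_gt hx0
    have h1 : HasDerivAt (fun x : ℝ => 2*x - 5/2*Real.log x - 13/(24*x))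
        (2 - 5/2*(1/x) - (0*(24*x) - 13*(24*1))/(24*x)^2) x := by
      simpa [id, Pi.div_def, Pi.sub_def] using (((hasDerivAt_id x).const_mul 2).sub
        ((Real.hasDerivAt_log hx0').const_mul (5/2))).sub
        ((hasDerivAt_const x 13).div ((hasDerivAt_id x).const_mul 24) (by positivity))
    exact h1.congr_deriv (by field_simp; ring)
  · exact intble3 u v hu huv

lemma dstar_congr (Dstar f : ℝ → ℝ) (u v : ℝ) (huv : u ≤ v)
    (hf : ∀ x ∈ Set.Ioc u v, Dstar x = f x)
    (hfint : IntervalIntegrable f MeasureTheory.volume u v) :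
    (∫ x in u..v, Dstar x) = (∫ x in u..v, f x) ∧
      IntervalIntegrable Dstar MeasureTheory.volume u v := by
  constructor
  · rw [intervalIntegral.integral_of_le huv, intervalIntegral.integral_of_le huv]
    exact MeasureTheory.setIntegral_congr_fun measurableSet_Ioc (fun x hx => hf x hx)
  · rw [intervalIntegrable_iff_integrableOn_Ioc_of_le huv] at hfint ⊢
    exact hfint.congr_fun (fun x hx => (hf x hx).symm) measurableSet_Ioc

end Integrals

section Regions

lemma neg_log_le_M (p : ℝ) (hp0 : 0 < p) (hp1 : p ≤ 1) :
    -Real.log p ≤ 2*(1-p)/(1+p) + (2/3)*((1-p)/(1+p))^3 + (1-p)^5/(10*p*(1+p)^3) := by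
  have h := log_le_artanh5 (1/p) (by rw [le_div_iff₀ hp0]; linarith)
  rw [one_div, Real.log_inv] at h
  have heq : 2*(1/p-1)/(1/p+1) + (2/3)*((1/p-1)/(1/p+1))^3 + (1/p-1)^5/(10*(1/p)*(1/p+1)^3)
      = 2*(1-p)/(1+p) + (2/3)*((1-p)/(1+p))^3 + (1-p)^5/(10*p*(1+p)^3) := by
    have hp1' : (0:ℝ) < 1 + p := by linarith
    field_simp
  rw [← heq]
  convert h using 2 <;> norm_num

lemma inv_log_two_le : (Real.log 2)⁻¹ ≤ 1.4426950415 := by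
  have h := Real.log_two_gt_d9
  rw [inv_le_comm₀ (by linarith) (by norm_num)]
  norm_num at h ⊢
  linarith

lemma reduce_bound (p K b k e Kc : ℝ) (hp0 : 0 < p) (hp1 : p ≤ 1)
    (hk : 0 < k) (hK : K ≤ Kc) :
    -Real.log p / Real.log 2 + (1/p) * (K + b*p - k*Real.log p + e/p) ≤
      (2*(1-p)/(1+p) + (2/3)*((1-p)/(1+p))^3 + (1-p)^5/(10*p*(1+p)^3)) * (1.4426950415 + k/p)
        + b + Kc/p + e/p^2 := by
  have hM := neg_log_le_M p hp0 hp1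
  have hX : 0 ≤ -Real.log p := by
    have := Real.log_nonpos (le_of_lt hp0) hp1; linarith
  have hL2 : (0:ℝ) < Real.log 2 := Real.log_pos (by norm_num)
  have hinv := inv_log_two_le
  have h1 : -Real.log p / Real.log 2 ≤ (-Real.log p) * 1.4426950415 := by
    rw [div_eq_mul_inv]
    exact mul_le_mul_of_nonneg_left hinv hX
  have h2 : (1/p) * (-k*Real.log p) ≤
      (2*(1-p)/(1+p) + (2/3)*((1-p)/(1+p))^3 + (1-p)^5/(10*p*(1+p)^3)) * (k/p) := by
    have : (1/p) * (-k*Real.log p) = (-Real.log p) * (k/p) := by ring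
    rw [this]
    exact mul_le_mul_of_nonneg_right hM (by positivity)
  have h3 : (-Real.log p) * 1.4426950415 ≤
      (2*(1-p)/(1+p) + (2/3)*((1-p)/(1+p))^3 + (1-p)^5/(10*p*(1+p)^3)) * 1.4426950415 :=
    mul_le_mul_of_nonneg_right hM (by norm_num)
  have h4 : (1/p) * K ≤ (1/p) * Kc := mul_le_mul_of_nonneg_left hK (by positivity)
  have hexp : (1/p) * (K + b*p - k*Real.log p + e/p)
      = (1/p)*K + b + (1/p)*(-k*Real.log p) + e/p^2 := by
    field_simp
    ring
  rw [hexp]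
  have hKc : (1/p) * Kc = Kc/p := by ring
  linarith [h1, h2, h3, h4]

lemma region1 (p K : ℝ) (hplo : (0.5:ℝ) ≤ p) (hphi : p ≤ 0.5458759) (hK : K ≤ -2.39577143) :
    -Real.log p / Real.log 2 + (1/p) * (K + 1*p - 1*Real.log p + 0/p) ≤ -1.4034 := by
  have hp0 : (0:ℝ) < p := by norm_num at hplo ⊢; linarith
  have hp1 : p ≤ 1 := by norm_num at hphi ⊢; linarith
  have h := reduce_bound p K 1 1 0 (-2.39577143) hp0 hp1 one_pos hK
  refine h.trans ?_
  have hq : 3 - 5090115551/2000000000*p - 7896900401/400000000*p^2 + 2793484509/200000000*p^3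
      + 7230401171/200000000*p^4 - 9869271079/400000000*p^5 - 8656170249/2000000000*p^6 ≤ 0 := by
    nlinarith [mul_nonneg (sub_nonneg.2 hplo) (sub_nonneg.2 hphi), sq_nonneg (p-0.5),
      mul_nonneg (mul_nonneg (sub_nonneg.2 hplo) (sub_nonneg.2 hphi)) (sub_nonneg.2 hplo),
      sq_nonneg (p*(p-0.5)), sq_nonneg (p-0.52), sq_nonneg (p-0.5458759)]
  have hp1' : (0:ℝ) < 1 + p := by linarith
  have expand : (2*(1-p)/(1+p) + (2/3)*((1-p)/(1+p))^3 + (1-p)^5/(10*p*(1+p)^3))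
        * (1.4426950415 + 1/p) + 1 + (-2.39577143)/p + 0/p^2 + 1.4034
      = (3 - 5090115551/2000000000*p - 7896900401/400000000*p^2 + 2793484509/200000000*p^3
      + 7230401171/200000000*p^4 - 9869271079/400000000*p^5 - 8656170249/2000000000*p^6)
        /(30*p^2*(1+p)^3) := by
    field_simp
    ring
  have hdiv := div_nonpos_of_nonpos_of_nonneg hq (by positivity :
    (0:ℝ) ≤ 30*p^2*(1+p)^3)
  linarith [expand ▸ hdiv]

lemma region2 (p K : ℝ) (hplo : (0.5458758:ℝ) ≤ p) (hphi : p ≤ 0.75) (hK : K ≤ -2.64567006) :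
    -Real.log p / Real.log 2 + (1/p) * (K + 3/2*p - 7/4*Real.log p + (-25/96)/p) ≤ -1.4034 := by
  have hp0 : (0:ℝ) < p := by norm_num at hplo ⊢; linarith
  have hp1 : p ≤ 1 := by norm_num at hphi ⊢; linarith
  have h := reduce_bound p K (3/2) (7/4) (-25/96) (-2.64567006) hp0 hp1 (by norm_num) hK
  refine h.trans ?_
  have hq : -41/16 + 30540966649/2000000000*p - 11268251081/400000000*p^2 + 1232809169/200000000*p^3
      + 4981009391/200000000*p^4 - 4769271079/400000000*p^5 - 8656170249/2000000000*p^6 ≤ 0 := by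
    nlinarith [mul_nonneg (sub_nonneg.2 hplo) (sub_nonneg.2 hphi), sq_nonneg (p-0.75),
      mul_nonneg (mul_nonneg (sub_nonneg.2 hplo) (sub_nonneg.2 hphi)) (sub_nonneg.2 hplo),
      sq_nonneg (p*(p-0.7)), sq_nonneg (p-0.65), sq_nonneg (p-0.5458758)]
  have hp1' : (0:ℝ) < 1 + p := by linarith
  have expand : (2*(1-p)/(1+p) + (2/3)*((1-p)/(1+p))^3 + (1-p)^5/(10*p*(1+p)^3))
        * (1.4426950415 + (7/4)/p) + 3/2 + (-2.64567006)/p + (-25/96)/p^2 + 1.4034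
      = (-41/16 + 30540966649/2000000000*p - 11268251081/400000000*p^2 + 1232809169/200000000*p^3
      + 4981009391/200000000*p^4 - 4769271079/400000000*p^5 - 8656170249/2000000000*p^6)
        /(30*p^2*(1+p)^3) := by
    field_simp
    ring
  have hdiv := div_nonpos_of_nonpos_of_nonneg hq (by positivity :
    (0:ℝ) ≤ 30*p^2*(1+p)^3)
  linarith [expand ▸ hdiv]

lemma region3 (p K : ℝ) (hplo : (0.75:ℝ) ≤ p) (hphi : p ≤ 0.89433757) (hK : K ≤ -2.86143161) :
    -Real.log p / Real.log 2 + (1/p) * (K + 2*p - 5/2*Real.log p + (-13/24)/p) ≤ -1.4034 := by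
  have hp0 : (0:ℝ) < p := by norm_num at hplo ⊢; linarith
  have hp1 : p ≤ 1 := by norm_num at hphi ⊢; linarith
  have h := reduce_bound p K 2 (5/2) (-13/24) (-2.86143161) hp0 hp1 (by norm_num) hK
  refine h.trans ?_
  have hq : -35/4 + 64470273649/2000000000*p - 14160666881/400000000*p^2 + 161601269/200000000*p^3
      + 2936440091/200000000*p^4 + 330728921/400000000*p^5 - 8656170249/2000000000*p^6 ≤ 0 := by
    nlinarith [mul_nonneg (sub_nonneg.2 hplo) (sub_nonneg.2 hphi), sq_nonneg (p-0.8),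
      mul_nonneg (mul_nonneg (sub_nonneg.2 hplo) (sub_nonneg.2 hphi)) (sub_nonneg.2 hplo),
      sq_nonneg (p*(p-0.8)), sq_nonneg (p-0.89), sq_nonneg (p-0.75)]
  have hp1' : (0:ℝ) < 1 + p := by linarith
  have expand : (2*(1-p)/(1+p) + (2/3)*((1-p)/(1+p))^3 + (1-p)^5/(10*p*(1+p)^3))
        * (1.4426950415 + (5/2)/p) + 2 + (-2.86143161)/p + (-13/24)/p^2 + 1.4034
      = (-35/4 + 64470273649/2000000000*p - 14160666881/400000000*p^2 + 161601269/200000000*p^3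
      + 2936440091/200000000*p^4 + 330728921/400000000*p^5 - 8656170249/2000000000*p^6)
        /(30*p^2*(1+p)^3) := by
    field_simp
    ring
  have hdiv := div_nonpos_of_nonpos_of_nonneg hq (by positivity :
    (0:ℝ) ≤ 30*p^2*(1+p)^3)
  linarith [expand ▸ hdiv]

lemma region4 (p K : ℝ) (hplo : (0.8943375:ℝ) ≤ p) (hp1 : p ≤ 1) (hK : K ≤ -2.40524851) :
    -Real.log p / Real.log 2 + (1/p) * (K + 1*p - 1*Real.log p + 0/p) ≤ -1.4034 := by
  have hp0 : (0:ℝ) < p := by norm_num at hplo ⊢; linarith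
  have h := reduce_bound p K 1 1 0 (-2.40524851) hp0 hp1 one_pos hK
  refine h.trans ?_
  have hq : 3 - 5658740351/2000000000*p - 8238075281/400000000*p^2 + 2622897069/200000000*p^3
      + 7173538691/200000000*p^4 - 9869271079/400000000*p^5 - 8656170249/2000000000*p^6 ≤ 0 := by
    nlinarith [sq_nonneg (p - 0.904), mul_nonneg (sub_nonneg.2 hplo) (sub_nonneg.2 hp1),
      mul_nonneg (mul_nonneg (sub_nonneg.2 hplo) (sub_nonneg.2 hp1)) (sub_nonneg.2 hplo),
      sq_nonneg p, sq_nonneg (p-1), sq_nonneg (p*(p-0.904)), sq_nonneg (p^2-0.904)]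
  have hp1' : (0:ℝ) < 1 + p := by linarith
  have expand : (2*(1-p)/(1+p) + (2/3)*((1-p)/(1+p))^3 + (1-p)^5/(10*p*(1+p)^3))
        * (1.4426950415 + 1/p) + 1 + (-2.40524851)/p + 0/p^2 + 1.4034
      = (3 - 5658740351/2000000000*p - 8238075281/400000000*p^2 + 2622897069/200000000*p^3
      + 7173538691/200000000*p^4 - 9869271079/400000000*p^5 - 8656170249/2000000000*p^6)
        /(30*p^2*(1+p)^3) := by
    field_simp
    ring
  have hdiv := div_nonpos_of_nonpos_of_nonneg hq (by positivity :
    (0:ℝ) ≤ 30*p^2*(1+p)^3)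
  linarith [expand ▸ hdiv]

end Regions

set_option maxHeartbeats 1000000 in
/-- The per-step cost function `D*` of (1,2)Insertion* integrates to a
linear-term coefficient at most `-1.4034` for every `p ∈ (1/2, 1]`. -/
theorem twelveInsertionStar_linear_coefficient (Dstar : ℝ → ℝ)
    (h1 : ∀ x ∈ Set.Ioc (1/2 : ℝ) (3/4 - Real.sqrt 6/12), Dstar x = 1 - 1/x)
    (h2 : ∀ x ∈ Set.Ioc (3/4 - Real.sqrt 6/12) (3/4 : ℝ),
      Dstar x = 3/2 - 7/(4*x) + 25/(96*x^2))
    (h3 : ∀ x ∈ Set.Ioc (3/4 : ℝ) (3/4 + Real.sqrt 3/12),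
      Dstar x = 2 - 5/(2*x) + 13/(24*x^2))
    (h4 : ∀ x ∈ Set.Ioc (3/4 + Real.sqrt 3/12) (1 : ℝ), Dstar x = 1 - 1/x) :
    ∀ p ∈ Set.Ioc (1/2 : ℝ) 1,
      -Real.logb 2 p
        + (1/p) * (-1 + (∫ x in (1/2 : ℝ)..1, Dstar x) + ∫ x in (1/2 : ℝ)..p, Dstar x)
      ≤ -1.4034 := by
  intro p hp
  obtain ⟨hphalf, hpone⟩ := hp
  have h6lt := sqrt6_lt
  have h6gt := sqrt6_gt
  have h3lt := sqrt3_lt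
  have h3gt := sqrt3_gt
  norm_num at h6lt h6gt h3lt h3gt
  have hApos : (0:ℝ) < 3/4 - Real.sqrt 6/12 := by linarith
  have hAlo : (0.5458758:ℝ) < 3/4 - Real.sqrt 6/12 := by linarith
  have hAhi : (3/4 - Real.sqrt 6/12 : ℝ) < 0.5458759 := by linarith
  have hhalfA : (1/2:ℝ) ≤ 3/4 - Real.sqrt 6/12 := by linarith
  have hA34 : (3/4 - Real.sqrt 6/12 : ℝ) ≤ 3/4 := by linarith [Real.sqrt_nonneg (6:ℝ)]
  have h34C : (3/4:ℝ) ≤ 3/4 + Real.sqrt 3/12 := by linarith [Real.sqrt_nonneg (3:ℝ)]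
  have hClo : (0.8943375:ℝ) < 3/4 + Real.sqrt 3/12 := by linarith
  have hChi : (3/4 + Real.sqrt 3/12 : ℝ) < 0.89433757 := by linarith
  have hC1 : (3/4 + Real.sqrt 3/12 : ℝ) ≤ 1 := by linarith
  have h6sq : Real.sqrt 6 ^ 2 = 6 := Real.sq_sqrt (by norm_num)
  have h3sq : Real.sqrt 3 ^ 2 = 3 := Real.sq_sqrt (by norm_num)
  have e1 : 25/(96*(3/4 - Real.sqrt 6/12)) = (9 + Real.sqrt 6)/24 := by
    rw [div_eq_div_iff (by positivity) (by norm_num)]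
    nlinarith [h6sq]
  have e2 : 13/(24*(3/4 + Real.sqrt 3/12)) = (9 - Real.sqrt 3)/12 := by
    rw [div_eq_div_iff (by positivity) (by norm_num)]
    nlinarith [h3sq]
  have hloghalf : Real.log (1/2 : ℝ) = -Real.log 2 := by
    rw [one_div, Real.log_inv]
  -- piece computations
  have P1 : ∀ v : ℝ, 1/2 ≤ v → v ≤ 3/4 - Real.sqrt 6/12 →
      ((∫ x in (1/2:ℝ)..v, Dstar x) = (v - Real.log v) - (1/2 - Real.log (1/2))
        ∧ IntervalIntegrable Dstar MeasureTheory.volume (1/2) v) := by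
    intro v hv1 hv2
    obtain ⟨hval, hint⟩ := dstar_congr Dstar _ _ _ hv1
      (fun x hx => h1 x ⟨hx.1, hx.2.trans hv2⟩) (intble1 _ _ (by norm_num) hv1)
    exact ⟨hval.trans (int_piece1 _ _ (by norm_num) hv1), hint⟩
  have P2 : ∀ v : ℝ, 3/4 - Real.sqrt 6/12 ≤ v → v ≤ 3/4 →
      ((∫ x in (3/4 - Real.sqrt 6/12 : ℝ)..v, Dstar x)
          = (3/2*v - 7/4*Real.log v - 25/(96*v))
            - (3/2*(3/4 - Real.sqrt 6/12) - 7/4*Real.log (3/4 - Real.sqrt 6/12)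
                - 25/(96*(3/4 - Real.sqrt 6/12)))
        ∧ IntervalIntegrable Dstar MeasureTheory.volume (3/4 - Real.sqrt 6/12) v) := by
    intro v hv1 hv2
    obtain ⟨hval, hint⟩ := dstar_congr Dstar _ _ _ hv1
      (fun x hx => h2 x ⟨hx.1, hx.2.trans hv2⟩) (intble2 _ _ hApos hv1)
    exact ⟨hval.trans (int_piece2 _ _ hApos hv1), hint⟩
  have P3 : ∀ v : ℝ, 3/4 ≤ v → v ≤ 3/4 + Real.sqrt 3/12 →
      ((∫ x in (3/4:ℝ)..v, Dstar x)
          = (2*v - 5/2*Real.log v - 13/(24*v))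
            - (2*(3/4) - 5/2*Real.log (3/4) - 13/(24*(3/4)))
        ∧ IntervalIntegrable Dstar MeasureTheory.volume (3/4) v) := by
    intro v hv1 hv2
    obtain ⟨hval, hint⟩ := dstar_congr Dstar _ _ _ hv1
      (fun x hx => h3 x ⟨hx.1, hx.2.trans hv2⟩) (intble3 _ _ (by norm_num) hv1)
    exact ⟨hval.trans (int_piece3 _ _ (by norm_num) hv1), hint⟩
  have P4 : ∀ v : ℝ, 3/4 + Real.sqrt 3/12 ≤ v → v ≤ 1 →
      ((∫ x in (3/4 + Real.sqrt 3/12 : ℝ)..v, Dstar x)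
          = (v - Real.log v)
            - ((3/4 + Real.sqrt 3/12) - Real.log (3/4 + Real.sqrt 3/12))
        ∧ IntervalIntegrable Dstar MeasureTheory.volume (3/4 + Real.sqrt 3/12) v) := by
    intro v hv1 hv2
    obtain ⟨hval, hint⟩ := dstar_congr Dstar _ _ _ hv1
      (fun x hx => h4 x ⟨hx.1, hx.2.trans hv2⟩) (intble1 _ _ (by linarith) hv1)
    exact ⟨hval.trans (int_piece1 _ _ (by linarith) hv1), hint⟩
  obtain ⟨v1, i1⟩ := P1 _ hhalfA le_rfl
  obtain ⟨v2, i2⟩ := P2 _ hA34 le_rfl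
  obtain ⟨v3, i3⟩ := P3 _ h34C le_rfl
  obtain ⟨v4, i4⟩ := P4 _ hC1 le_rfl
  have s1 := intervalIntegral.integral_add_adjacent_intervals i1 i2
  have i12 := i1.trans i2
  have s2 := intervalIntegral.integral_add_adjacent_intervals i12 i3
  have i13 := i12.trans i3
  have s3 := intervalIntegral.integral_add_adjacent_intervals i13 i4
  have hT : (∫ x in (1/2:ℝ)..1, Dstar x)
      = (((3/4 - Real.sqrt 6/12) - Real.log (3/4 - Real.sqrt 6/12)) - (1/2 - Real.log (1/2)))
      + ((3/2*(3/4) - 7/4*Real.log (3/4) - 25/(96*(3/4)))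
          - (3/2*(3/4 - Real.sqrt 6/12) - 7/4*Real.log (3/4 - Real.sqrt 6/12)
              - 25/(96*(3/4 - Real.sqrt 6/12))))
      + ((2*(3/4 + Real.sqrt 3/12) - 5/2*Real.log (3/4 + Real.sqrt 3/12)
            - 13/(24*(3/4 + Real.sqrt 3/12)))
          - (2*(3/4) - 5/2*Real.log (3/4) - 13/(24*(3/4))))
      + (((1:ℝ) - Real.log 1)
          - ((3/4 + Real.sqrt 3/12) - Real.log (3/4 + Real.sqrt 3/12))) := by
    rw [← s3, ← s2, ← s1, v1, v2, v3, v4]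
  rw [Real.logb, hT]
  have hp0 : (0:ℝ) < p := by linarith
  by_cases hpA : p ≤ 3/4 - Real.sqrt 6/12
  · obtain ⟨vp, _⟩ := P1 p (le_of_lt hphalf) hpA
    rw [vp]
    refine le_trans (le_of_eq ?_) (region1 p
      (1/2 + Real.sqrt 6/12 + Real.sqrt 3/6 + 3/4*Real.log (3/4 - Real.sqrt 6/12)
        + 3/4*Real.log (3/4) - 3/2*Real.log (3/4 + Real.sqrt 3/12) - Real.log 2
        - 3/2 - Real.log 2)
      (by linarith) (by linarith [hAhi]) ?_)
    · rw [e1, e2, hloghalf, Real.log_one]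
      ring
    · linarith [Real.log_two_gt_d9, LA_lt, LB_lt, LC_gt]
  · push_neg at hpA
    by_cases hpB : p ≤ 3/4
    · obtain ⟨vp, ip⟩ := P2 p (le_of_lt hpA) hpB
      have sp := intervalIntegral.integral_add_adjacent_intervals i1 ip
      rw [← sp, v1, vp]
      refine le_trans (le_of_eq ?_) (region2 p
        (1/2 + Real.sqrt 6/12 + Real.sqrt 3/6 + 3/4*Real.log (3/4 - Real.sqrt 6/12)
          + 3/4*Real.log (3/4) - 3/2*Real.log (3/4 + Real.sqrt 3/12) - Real.log 2
          - 3/2 - Real.log 2 + Real.sqrt 6/12 + 3/4*Real.log (3/4 - Real.sqrt 6/12))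
        (by linarith) (by linarith) ?_)
      · rw [e1, e2, hloghalf, Real.log_one]
        ring
      · linarith [Real.log_two_gt_d9, LA_lt, LB_lt, LC_gt]
    · push_neg at hpB
      by_cases hpC : p ≤ 3/4 + Real.sqrt 3/12
      · obtain ⟨vp, ip⟩ := P3 p (le_of_lt hpB) hpC
        have sp := intervalIntegral.integral_add_adjacent_intervals i12 ip
        rw [← sp, ← s1, v1, v2, vp]
        refine le_trans (le_of_eq ?_) (region3 p
          (1/2 + Real.sqrt 6/12 + Real.sqrt 3/6 + 3/4*Real.log (3/4 - Real.sqrt 6/12)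
            + 3/4*Real.log (3/4) - 3/2*Real.log (3/4 + Real.sqrt 3/12) - Real.log 2
            - 3/2 - Real.log 2 + Real.sqrt 6/12 + 3/4*Real.log (3/4 - Real.sqrt 6/12)
            + 3/4*Real.log (3/4))
          (by linarith) (by linarith) ?_)
        · rw [e1, e2, hloghalf, Real.log_one]
          ring
        · linarith [Real.log_two_gt_d9, LA_lt, LB_lt, LC_gt]
      · push_neg at hpC
        obtain ⟨vp, ip⟩ := P4 p (le_of_lt hpC) hpone
        have sp := intervalIntegral.integral_add_adjacent_intervals i13 ip
        rw [← sp, ← s2, ← s1, v1, v2, v3, vp]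
        refine le_trans (le_of_eq ?_) (region4 p
          (1 + Real.sqrt 6/6 + Real.sqrt 3/3 + 3/2*Real.log (3/4 - Real.sqrt 6/12)
            + 3/2*Real.log (3/4) - 3*Real.log (3/4 + Real.sqrt 3/12) - 2*Real.log 2 - 2)
          (by linarith) hpone ?_)
        · rw [e1, e2, hloghalf, Real.log_one]
          ring
        · linarith [Real.log_two_gt_d9, LA_lt, LB_lt, LC_gt]
end

section
/- For every integer i ≥ 2, with m = ⌈log₂(i−1)⌉, the following exact identity holds: Σ_{t=1}^{i−1} t·⌈log₂ t⌉ = m·i(i−1)/2 − 4^m/6 − 2^m/2 + 2/3. -/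
lemma sum_mul_clog_aux (n : ℕ) (hn : 1 ≤ n) :
    ∑ t ∈ Finset.Icc 1 n, (t : ℝ) * (Nat.clog 2 t : ℝ)
      = (Nat.clog 2 n : ℝ) * ((n : ℝ) + 1) * (n : ℝ) / 2
        - (4 : ℝ) ^ (Nat.clog 2 n) / 6 - (2 : ℝ) ^ (Nat.clog 2 n) / 2 + 2/3 := by
  induction n with
  | zero => omega
  | succ n ih =>
    rcases Nat.lt_or_ge 1 (n + 1) with h1 | h1
    · have hn' : 1 ≤ n := by omega
      have ih := ih hn'
      rw [Finset.sum_Icc_succ_top (by omega : 1 ≤ n + 1), ih]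
      set m := Nat.clog 2 n with hm
      have hle : n ≤ 2 ^ m := Nat.le_pow_clog (by norm_num) n
      by_cases hc : n + 1 ≤ 2 ^ m
      · have h2 : Nat.clog 2 (n + 1) = m :=
          le_antisymm ((Nat.clog_le_iff_le_pow (by norm_num)).2 hc)
            (Nat.clog_mono_right 2 (by omega))
        rw [h2]; push_cast; ring
      · have hn2 : n = 2 ^ m := by omega
        have h2 : Nat.clog 2 (n + 1) = m + 1 := by
          apply le_antisymm
          · exact (Nat.clog_le_iff_le_pow (by norm_num)).2 (by rw [pow_succ]; omega)
          · exact (Nat.lt_clog_iff_pow_lt (by norm_num)).2 (by omega)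
        rw [h2]
        have hx : (n : ℝ) = 2 ^ m := by rw [hn2]; push_cast; ring
        have h4 : (4 : ℝ) ^ m = 2 ^ m * 2 ^ m := by
          rw [show (4:ℝ) = 2 * 2 by norm_num, mul_pow]
        push_cast
        rw [pow_succ, pow_succ, h4, ← hx]
        ring
    · have h0 : n = 0 := by omega
      subst h0
      norm_num [Nat.clog_one_right]

/-- closed form for `Σ_{t=1}^{i-1} t·⌈log₂ t⌉` with `m = ⌈log₂(i-1)⌉`.
Here `⌈log₂ t⌉` is `Nat.clog 2 t`. -/
theorem sum_mul_clog_closed_form (i : ℕ) (hi : 2 ≤ i) (m : ℕ)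
    (hm : m = Nat.clog 2 (i - 1)) :
    ∑ t ∈ Finset.Icc 1 (i - 1), (t : ℝ) * (Nat.clog 2 t : ℝ)
      = (m : ℝ) * (i : ℝ) * ((i : ℝ) - 1) / 2 - (4 : ℝ)^m / 6 - (2 : ℝ)^m / 2 + 2/3 := by
  have h := sum_mul_clog_aux (i - 1) (by omega)
  rw [← hm] at h
  have hcast : ((i - 1 : ℕ) : ℝ) = (i : ℝ) - 1 := by
    have : (1:ℕ) ≤ i := by omega
    push_cast [this]; ring
  rw [h, hcast]
  ring
end

section
/- For every integer i ≥ 2, with m = ⌈log₂(i−1)⌉, the following exact identity holds: Σ_{t=1}^{i−1} 2^{⌈log₂ t⌉} = i·2^m − 4^m/3 − 2^m + 1/3. -/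
lemma sum_two_pow_clog_aux (n : ℕ) (hn : 1 ≤ n) :
    ∑ t ∈ Finset.Icc 1 n, (2 : ℝ) ^ (Nat.clog 2 t)
      = (n : ℝ) * 2 ^ (Nat.clog 2 n) - ((4 : ℝ) ^ (Nat.clog 2 n) - 1) / 3 := by
  induction n with
  | zero => omega
  | succ k ih =>
    rcases Nat.lt_or_ge k 1 with h1 | hk
    · interval_cases k
      norm_num [Nat.clog_one_right]
    · rw [Finset.sum_Icc_succ_top hn, ih hk]
      set m := Nat.clog 2 k with hmdef
      have hle : k ≤ 2 ^ m := Nat.le_pow_clog one_lt_two k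
      have hmono : m ≤ Nat.clog 2 (k + 1) :=
        Nat.clog_mono_right 2 (Nat.le_succ k)
      by_cases hc : k + 1 ≤ 2 ^ m
      · have heq : Nat.clog 2 (k + 1) = m :=
          le_antisymm ((Nat.clog_le_iff_le_pow one_lt_two).mpr hc) hmono
        rw [heq]
        push_cast
        ring
      · have hk2 : k = 2 ^ m := by omega
        have hlt : m < Nat.clog 2 (k + 1) := by
          refine (Nat.lt_clog_iff_pow_lt one_lt_two).mpr ?_
          omega
        have hle2 : Nat.clog 2 (k + 1) ≤ m + 1 := by
          refine (Nat.clog_le_iff_le_pow one_lt_two).mpr ?_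
          have : 2 ^ m ≤ 2 ^ m * 2 := by omega
          simpa [pow_succ, hk2] using by omega
        have heq : Nat.clog 2 (k + 1) = m + 1 := by omega
        rw [heq]
        have hkR : (k : ℝ) = 2 ^ m := by
          rw [hk2]; push_cast; ring
        push_cast
        rw [hkR]
        have h4 : ∀ j : ℕ, (4 : ℝ) ^ j = 2 ^ (2 * j) := by
          intro j; rw [pow_mul]; norm_num
        have e1 : (2 : ℝ) ^ (2 * m) = 2 ^ m * 2 ^ m := by rw [two_mul, pow_add]
        have e2 : (2 : ℝ) ^ (m + 1) = 2 ^ m * 2 := by rw [pow_succ]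
        have e3 : (2 : ℝ) ^ (2 * (m + 1)) = 2 ^ m * 2 ^ m * 4 := by
          rw [two_mul, pow_add, e2]; ring
        rw [h4 m, h4 (m + 1), e1, e2, e3]
        ring

/-- closed form for `Σ_{t=1}^{i-1} 2^⌈log₂ t⌉` with `m = ⌈log₂(i-1)⌉`.
Here `⌈log₂ t⌉` is `Nat.clog 2 t`. -/
theorem sum_two_pow_clog_closed_form (i : ℕ) (hi : 2 ≤ i) (m : ℕ)
    (hm : m = Nat.clog 2 (i - 1)) :
    ∑ t ∈ Finset.Icc 1 (i - 1), (2 : ℝ) ^ (Nat.clog 2 t)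
      = (i : ℝ) * (2 : ℝ)^m - (4 : ℝ)^m / 3 - (2 : ℝ)^m + 1/3 := by
  have hn : 1 ≤ i - 1 := by omega
  rw [sum_two_pow_clog_aux (i - 1) hn, ← hm]
  have hiR : ((i - 1 : ℕ) : ℝ) = (i : ℝ) - 1 := by
    push_cast [Nat.cast_sub (by omega : 1 ≤ i)]
    ring
  rw [hiR]
  ring
end

section
/- There exists a constant C > 0 such that for every even integer i ≥ 4, writing p_i = i/2^{⌈log₂ i⌉}, we have | Σ_{ℓ=1}^{i−1} ((i−ℓ)/binom(i,2)) · (⌈log₂(i−ℓ)⌉ + 1 − 2^{⌈log₂(i−ℓ)⌉}/(i−ℓ)) − (⌈log₂(i−1)⌉ + 1 − 2/p_i + 1/(3·p_i²)) | ≤ C/i. -/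
private lemma clog2_eq_succ {m n : ℕ} (h1 : 2 ^ m < n) (h2 : n ≤ 2 ^ (m + 1)) :
    Nat.clog 2 n = m + 1 := by
  refine le_antisymm ?_ ?_
  · calc Nat.clog 2 n ≤ Nat.clog 2 (2 ^ (m + 1)) := Nat.clog_mono_right 2 h2
    _ = m + 1 := Nat.clog_pow 2 (m + 1) one_lt_two
  · by_contra h
    push_neg at h
    have h' : Nat.clog 2 n ≤ m := by omega
    have := Nat.le_pow_clog one_lt_two n
    have : n ≤ 2 ^ m := this.trans (Nat.pow_le_pow_right (by norm_num) h')
    omega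

private lemma sum_g (n : ℕ) (hn : 1 ≤ n) :
    ∑ j ∈ Finset.Icc 1 n, ((j : ℝ) * ((Nat.clog 2 j : ℝ) + 1) - (2 : ℝ) ^ (Nat.clog 2 j))
    = ((Nat.clog 2 n : ℝ) + 1) * n * (n + 1) / 2
      + (((2 : ℝ) ^ (Nat.clog 2 n)) ^ 2 / 3 - (2 : ℝ) ^ (Nat.clog 2 n)
          - n * (2 * (2 : ℝ) ^ (Nat.clog 2 n)) + 2 / 3) / 2 := by
  induction n, hn using Nat.le_induction with
  | base => norm_num [Nat.clog_one_right]
  | succ n hn ih =>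
    rw [Finset.sum_Icc_succ_top (by omega), ih]
    have hle : n ≤ 2 ^ (Nat.clog 2 n) := Nat.le_pow_clog one_lt_two n
    rcases lt_or_eq_of_le hle with hlt | heq
    · -- same block: clog 2 (n+1) = clog 2 n
      have hc : Nat.clog 2 (n + 1) = Nat.clog 2 n :=
        le_antisymm
          ((Nat.clog_mono_right 2 (by omega)).trans
            (le_of_eq (Nat.clog_pow 2 _ one_lt_two)))
          (Nat.clog_mono_right 2 (by omega))
      rw [hc]
      push_cast
      ring
    · -- n = 2^c, clog 2 (n+1) = c + 1
      set c := Nat.clog 2 n with hcdef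
      have hc : Nat.clog 2 (n + 1) = c + 1 := by
        apply clog2_eq_succ
        · omega
        · have : 2 ^ c ≤ 2 ^ (c + 1) := Nat.pow_le_pow_right (by norm_num) (by omega)
          have h1 : 1 ≤ 2 ^ c := Nat.one_le_two_pow
          omega
      rw [hc]
      have hnR : (n : ℝ) = (2 : ℝ) ^ c := by
        rw [heq]; push_cast; ring
      push_cast [pow_succ]
      rw [hnR]
      ring

set_option maxHeartbeats 2000000 in
/-- the average number of comparisons in Step 4 of 2Merge is
`⌈log₂(i-1)⌉ + 1 - 2/p_i + 1/(3p_i²)` up to an `O(1/i)` error, where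
`p_i = i/2^⌈log₂ i⌉` and `⌈log₂ ·⌉` is `Nat.clog 2`. -/
theorem twoMerge_step4_average : ∃ C : ℝ, 0 < C ∧
    ∀ i : ℕ, 4 ≤ i → Even i →
      |(∑ ℓ ∈ Finset.Icc 1 (i - 1),
          (((i - ℓ : ℕ) : ℝ) / ((i : ℝ) * ((i : ℝ) - 1) / 2)) *
            ((Nat.clog 2 (i - ℓ) : ℝ) + 1 - (2 : ℝ) ^ (Nat.clog 2 (i - ℓ)) / ((i - ℓ : ℕ) : ℝ)))
        - ((Nat.clog 2 (i - 1) : ℝ) + 1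
            - 2 / ((i : ℝ) / 2 ^ (Nat.clog 2 i))
            + 1 / (3 * ((i : ℝ) / 2 ^ (Nat.clog 2 i))^2))|
      ≤ C / i := by
  refine ⟨8, by norm_num, fun i h4 heven => ?_⟩
  set k := Nat.clog 2 i with hk
  -- basic facts about k
  have hk2 : 2 ≤ k := by
    have : Nat.clog 2 4 ≤ k := Nat.clog_mono_right 2 h4
    have h44 : Nat.clog 2 4 = 2 := by
      have : (4 : ℕ) = 2 ^ 2 := by norm_num
      rw [this, Nat.clog_pow 2 2 one_lt_two]
    omega
  have hik : i ≤ 2 ^ k := Nat.le_pow_clog one_lt_two i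
  have hki : 2 ^ (k - 1) < i := Nat.pow_pred_clog_lt_self one_lt_two (by omega)
  -- i even, 2^(k-1) even (k ≥ 2) : i ≥ 2^(k-1) + 2
  have hpow_even : 2 ∣ 2 ^ (k - 1) := dvd_pow_self 2 (by omega)
  have hi2 : 2 ^ (k - 1) + 2 ≤ i := by
    obtain ⟨a, ha⟩ := heven
    obtain ⟨b, hb⟩ := hpow_even
    omega
  have hclog_pred : Nat.clog 2 (i - 1) = k := by
    have := clog2_eq_succ (m := k - 1) (n := i - 1) (by omega)
      (by have : 2 ^ (k - 1 + 1) = 2 ^ k := by congr 1; omega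
          omega)
    omega
  rw [hclog_pred]
  -- reindex the sum: ℓ ↦ i - ℓ
  have hreindex :
      (∑ ℓ ∈ Finset.Icc 1 (i - 1),
          (((i - ℓ : ℕ) : ℝ) / ((i : ℝ) * ((i : ℝ) - 1) / 2)) *
            ((Nat.clog 2 (i - ℓ) : ℝ) + 1 - (2 : ℝ) ^ (Nat.clog 2 (i - ℓ)) / ((i - ℓ : ℕ) : ℝ)))
      = ∑ j ∈ Finset.Icc 1 (i - 1),
          (((j : ℕ) : ℝ) / ((i : ℝ) * ((i : ℝ) - 1) / 2)) *
            ((Nat.clog 2 j : ℝ) + 1 - (2 : ℝ) ^ (Nat.clog 2 j) / ((j : ℕ) : ℝ)) := by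
    refine Finset.sum_nbij' (fun ℓ => i - ℓ) (fun j => i - j) ?_ ?_ ?_ ?_ ?_ <;>
      intro a ha <;> simp only [Finset.mem_Icc] at * <;> first | omega | rfl
  rw [hreindex]
  -- rewrite each summand as g j * (2 / (i * (i-1)))
  have hiR : (4 : ℝ) ≤ (i : ℝ) := by exact_mod_cast h4
  have hterm : ∀ j ∈ Finset.Icc 1 (i - 1),
      (((j : ℕ) : ℝ) / ((i : ℝ) * ((i : ℝ) - 1) / 2)) *
          ((Nat.clog 2 j : ℝ) + 1 - (2 : ℝ) ^ (Nat.clog 2 j) / ((j : ℕ) : ℝ))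
      = ((j : ℝ) * ((Nat.clog 2 j : ℝ) + 1) - (2 : ℝ) ^ (Nat.clog 2 j))
          * (2 / ((i : ℝ) * ((i : ℝ) - 1))) := by
    intro j hj
    simp only [Finset.mem_Icc] at hj
    have hj0 : (j : ℝ) ≠ 0 := Nat.cast_ne_zero.mpr (by omega)
    have hi0 : (i : ℝ) ≠ 0 := by linarith
    have hi1 : (i : ℝ) - 1 ≠ 0 := by linarith
    field_simp
  rw [Finset.sum_congr rfl hterm, ← Finset.sum_mul,
    sum_g (i - 1) (by omega), hclog_pred]
  -- now a pure computation
  have hcast : ((i - 1 : ℕ) : ℝ) = (i : ℝ) - 1 := by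
    have : (1 : ℕ) ≤ i := by omega
    push_cast [this]; ring
  rw [hcast]
  set x : ℝ := (2 : ℝ) ^ k with hx
  set ri : ℝ := (i : ℝ) with hri
  have hxi : ri ≤ x := by
    have := (Nat.cast_le (α := ℝ)).mpr hik
    push_cast at this
    simpa [hri, hx] using this
  have hxi2 : x ≤ 2 * (ri - 1) := by
    have h1 : (2 : ℝ) ^ (k - 1) ≤ ri - 1 := by
      have : (2 : ℕ) ^ (k - 1) + 1 ≤ i := by omega
      have := (Nat.cast_le (α := ℝ)).mpr this
      push_cast at this
      linarith
    have h2 : x = 2 * (2 : ℝ) ^ (k - 1) := by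
      rw [hx, ← pow_succ']
      congr 1
      omega
    linarith
  have hx0 : (0 : ℝ) < x := by positivity
  have hi0 : ri ≠ 0 := by linarith
  have hi1 : ri - 1 ≠ 0 := by linarith
  have hkey :
      (((k : ℝ) + 1) * (ri - 1) * (ri - 1 + 1) / 2
        + (x ^ 2 / 3 - x - (ri - 1) * (2 * x) + 2 / 3) / 2) * (2 / (ri * (ri - 1)))
      - ((k : ℝ) + 1 - 2 / (ri / x) + 1 / (3 * (ri / x) ^ 2))
      = (x ^ 2 - 3 * ri * x + 2 * ri) / (3 * ri ^ 2 * (ri - 1)) := by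
    field_simp
    ring
  rw [hkey]
  rw [abs_div, abs_of_pos (by nlinarith : (0 : ℝ) < 3 * ri ^ 2 * (ri - 1))]
  rw [div_le_div_iff₀ (by nlinarith) (by linarith)]
  have habs : |x ^ 2 - 3 * ri * x + 2 * ri| ≤ 6 * ri ^ 2 := by
    rw [abs_le]
    constructor
    · nlinarith
    · nlinarith
  nlinarith
end

section
/- Let f : [1/2, 1] → ℝ be monotone and continuous, and for a positive integer i let p_i = i/2^{⌈log₂ i⌉}. Then there exists a constant C > 0 such that for every integer n ≥ 2, | Σ_{i=1}^{n} f(p_i) − 2^{⌈log₂ n⌉}·( ∫_{1/2}^{1} f(x) dx + ∫_{1/2}^{p_n} f(x) dx ) | ≤ C·log₂ n. -/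
open Finset

/-- A dyadic block Riemann-sum estimate for a monotone function on `[1/2,1]`. -/
lemma block_est (f : ℝ → ℝ) (hmono : MonotoneOn f (Set.Icc (1/2 : ℝ) 1))
    (k m : ℕ) (hk : 1 ≤ k) (h1 : 2 ^ (k - 1) ≤ m) (h2 : m ≤ 2 ^ k) :
    |(∑ i ∈ Finset.Ioc (2 ^ (k - 1)) m, f (((i : ℕ) : ℝ) / 2 ^ k))
        - (2 : ℝ) ^ k * ∫ x in (1/2 : ℝ)..((m : ℝ) / 2 ^ k), f x| ≤ f 1 - f (1/2) := by
  have h2k : (0:ℝ) < (2:ℝ) ^ k := by positivity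
  have hpow : (2:ℝ) ^ k = 2 ^ (k-1) * 2 := by
    rw [← pow_succ]; congr 1; omega
  have hNhalf : ((2:ℝ) ^ (k - 1)) / 2 ^ k = 1 / 2 := by
    rw [hpow]; field_simp
  set N : ℕ := 2 ^ (k - 1) with hN
  have hNcast : ((N : ℕ) : ℝ) = (2:ℝ) ^ (k-1) := by push_cast [hN]; ring
  set a : ℕ := m - N with ha
  have ham : ((N:ℕ) : ℝ) + (a : ℝ) = (m : ℝ) := by
    rw [ha, Nat.cast_sub h1]; ring
  set x₀ : ℝ := ((N : ℕ) : ℝ) with hx₀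
  have hx₀half : x₀ / 2 ^ k = 1 / 2 := by rw [hNcast]; exact hNhalf
  have hm1 : (m : ℝ) / 2 ^ k ≤ 1 := by
    rw [div_le_one h2k]
    exact_mod_cast h2
  have hmap : ∀ t : ℝ, t ∈ Set.Icc x₀ (x₀ + (a : ℝ)) →
      t / 2 ^ k ∈ Set.Icc (1/2 : ℝ) 1 := by
    intro t ht
    constructor
    · rw [← hx₀half]
      exact (div_le_div_iff_of_pos_right h2k).mpr ht.1
    · have htm : t ≤ (m : ℝ) := by rw [← ham]; exact ht.2
      exact le_trans ((div_le_div_iff_of_pos_right h2k).mpr htm) hm1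
  have hgmono : MonotoneOn (fun t => f (t / 2 ^ k)) (Set.Icc x₀ (x₀ + (a : ℝ))) := by
    intro s hs t ht hst
    exact hmono (hmap s hs) (hmap t ht) (by gcongr)
  -- rewrite the sum as a right Riemann sum
  have hsum : (∑ i ∈ Finset.Ioc N m, f (((i : ℕ) : ℝ) / 2 ^ k))
      = ∑ j ∈ Finset.range a, f ((x₀ + ((j : ℕ) + 1 : ℕ)) / 2 ^ k) := by
    rw [← Finset.Ico_add_one_add_one_eq_Ioc, Finset.sum_Ico_eq_sum_range]
    have hcard : m + 1 - (N + 1) = a := by omega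
    rw [hcard]
    apply Finset.sum_congr rfl
    intro j _
    congr 1
    push_cast
    ring
  -- the integral after substitution
  have hint : (∫ x in x₀..(x₀ + (a : ℝ)), f (x / 2 ^ k))
      = (2:ℝ) ^ k * ∫ x in (1/2 : ℝ)..((m : ℝ) / 2 ^ k), f x := by
    rw [intervalIntegral.integral_comp_div (a := x₀) (b := x₀ + (a:ℝ)) f (ne_of_gt h2k),
      smul_eq_mul, hx₀half, ham]
  -- comparison estimates
  have hlow : (∫ x in x₀..(x₀ + (a : ℝ)), f (x / 2 ^ k))
      ≤ ∑ j ∈ Finset.range a, f ((x₀ + ((j : ℕ) + 1 : ℕ)) / 2 ^ k) := by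
    exact hgmono.integral_le_sum
  have hupp' : (∑ j ∈ Finset.range a, f ((x₀ + (j : ℕ)) / 2 ^ k))
      ≤ ∫ x in x₀..(x₀ + (a : ℝ)), f (x / 2 ^ k) := hgmono.sum_le_integral
  -- telescoping identity between left and right sums
  have hshift : (∑ j ∈ Finset.range a, f ((x₀ + ((j : ℕ) + 1 : ℕ)) / 2 ^ k))
      = (∑ j ∈ Finset.range a, f ((x₀ + (j : ℕ)) / 2 ^ k))
        + f ((x₀ + (a : ℝ)) / 2 ^ k) - f (x₀ / 2 ^ k) := by
    have h1' := Finset.sum_range_succ (fun j : ℕ => f ((x₀ + (j : ℕ)) / 2 ^ k)) a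
    have h2' := Finset.sum_range_succ' (fun j : ℕ => f ((x₀ + (j : ℕ)) / 2 ^ k)) a
    simp only [Nat.cast_zero, add_zero, Nat.cast_add, Nat.cast_one] at h1' h2'
    have : (∑ j ∈ Finset.range a, f ((x₀ + ((j : ℕ) + 1 : ℕ)) / 2 ^ k))
        = ∑ j ∈ Finset.range a, f ((x₀ + ((j : ℝ) + 1)) / 2 ^ k) := by
      apply Finset.sum_congr rfl; intro j _; push_cast; ring_nf
    rw [this]
    linarith
  have hend : f ((x₀ + (a : ℝ)) / 2 ^ k) ≤ f 1 := by
    apply hmono (hmap _ (Set.mem_Icc.mpr ⟨by simp, le_refl _⟩)) (by norm_num)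
    exact (hmap _ (Set.mem_Icc.mpr ⟨by simp, le_refl _⟩)).2
  have hstart : f (x₀ / 2 ^ k) = f (1/2) := by rw [hx₀half]
  rw [hsum, ← hint, abs_le]
  constructor
  · have hM0 : 0 ≤ f 1 - f (1/2) := by
      have := hmono (Set.mem_Icc.mpr ⟨le_refl _, by norm_num⟩)
        (Set.mem_Icc.mpr ⟨by norm_num, le_refl _⟩) (by norm_num)
      linarith
    linarith
  · linarith

lemma clog_eq_of (i k : ℕ) (h1 : 2 ^ k < i) (h2 : i ≤ 2 ^ (k + 1)) :
    Nat.clog 2 i = k + 1 := by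
  refine le_antisymm ?_ ?_
  · exact (Nat.clog_le_iff_le_pow one_lt_two).mpr h2
  · exact (Nat.lt_clog_iff_pow_lt one_lt_two).mpr h1

lemma sum_dyadic (f : ℝ → ℝ) (K : ℕ) :
    ∑ i ∈ Finset.Ioc (1:ℕ) (2 ^ K), f (((i : ℕ) : ℝ) / 2 ^ (Nat.clog 2 i))
      = ∑ k ∈ Finset.Icc 1 K, ∑ i ∈ Finset.Ioc (2 ^ (k - 1)) (2 ^ k),
          f (((i : ℕ) : ℝ) / 2 ^ k) := by
  induction K with
  | zero => simp
  | succ K ih =>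
    rw [← Finset.sum_Ioc_consecutive _ (Nat.one_le_two_pow)
        (Nat.pow_le_pow_right (by norm_num) (Nat.le_succ K)), ih,
      Finset.sum_Icc_succ_top (by omega)]
    congr 1
    have hKK : K + 1 - 1 = K := by omega
    rw [hKK]
    refine Finset.sum_congr (by norm_num) fun i hi => ?_
    rw [Finset.mem_Ioc] at hi
    rw [clog_eq_of i K hi.1 hi.2]

lemma geom_Icc (K : ℕ) : ∑ k ∈ Finset.Icc 1 K, (2:ℝ) ^ k = 2 ^ (K + 1) - 2 := by
  induction K with
  | zero => simp
  | succ K ih =>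
    rw [Finset.sum_Icc_succ_top (by omega), ih]
    ring

/-- evaluating `Σ_{i=1}^n f(p_i)` for a monotone continuous cost
function `f : [1/2,1] → ℝ`, where `p_i = i/2^⌈log₂ i⌉` (with `Nat.clog 2`). -/
theorem total_cost_riemann_sum_estimate (f : ℝ → ℝ)
    (hmono : MonotoneOn f (Set.Icc (1/2 : ℝ) 1))
    (hcont : ContinuousOn f (Set.Icc (1/2 : ℝ) 1)) :
    ∃ C : ℝ, 0 < C ∧ ∀ n : ℕ, 2 ≤ n →
      |(∑ i ∈ Finset.Icc 1 n, f ((i : ℝ) / 2 ^ (Nat.clog 2 i)))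
          - 2 ^ (Nat.clog 2 n) *
            ((∫ x in (1/2 : ℝ)..1, f x)
              + ∫ x in (1/2 : ℝ)..((n : ℝ) / 2 ^ (Nat.clog 2 n)), f x)|
        ≤ C * Real.logb 2 n := by
  set M0 : ℝ := f 1 - f (1/2) with hM0def
  have hM0 : 0 ≤ M0 := by
    have := hmono (Set.mem_Icc.mpr ⟨le_refl _, by norm_num⟩)
      (Set.mem_Icc.mpr ⟨by norm_num, le_refl _⟩) (by norm_num)
    simp only [hM0def]; linarith
  set I : ℝ := ∫ x in (1/2 : ℝ)..1, f x with hI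
  refine ⟨2 * (M0 + |f 1| + 2 * |I| + 1), by positivity, ?_⟩
  intro n hn
  set L : ℕ := Nat.clog 2 n with hLdef
  have hL1 : 1 ≤ L := Nat.clog_pos one_lt_two hn
  have hlow : 2 ^ (L - 1) < n := Nat.pow_pred_clog_lt_self one_lt_two (by omega)
  have hup : n ≤ 2 ^ L := Nat.le_pow_clog one_lt_two n
  -- decompose the sum
  have hdec1 : (∑ i ∈ Finset.Icc 1 n, f (((i : ℕ) : ℝ) / 2 ^ (Nat.clog 2 i)))
      = f 1 + ∑ i ∈ Finset.Ioc 1 n, f (((i : ℕ) : ℝ) / 2 ^ (Nat.clog 2 i)) := by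
    rw [← Finset.Ioc_insert_left (show 1 ≤ n by omega), Finset.sum_insert (by simp)]
    congr 1
    simp [Nat.clog_one_right]
  have hdec2 : (∑ i ∈ Finset.Ioc 1 n, f (((i : ℕ) : ℝ) / 2 ^ (Nat.clog 2 i)))
      = (∑ i ∈ Finset.Ioc (1:ℕ) (2 ^ (L - 1)), f (((i : ℕ) : ℝ) / 2 ^ (Nat.clog 2 i)))
        + ∑ i ∈ Finset.Ioc (2 ^ (L - 1)) n, f (((i : ℕ) : ℝ) / 2 ^ (Nat.clog 2 i)) :=
    (Finset.sum_Ioc_consecutive _ Nat.one_le_two_pow (le_of_lt hlow)).symm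
  have hdec3 : (∑ i ∈ Finset.Ioc (2 ^ (L - 1)) n, f (((i : ℕ) : ℝ) / 2 ^ (Nat.clog 2 i)))
      = ∑ i ∈ Finset.Ioc (2 ^ (L - 1)) n, f (((i : ℕ) : ℝ) / 2 ^ L) := by
    apply Finset.sum_congr rfl
    intro i hi
    rw [Finset.mem_Ioc] at hi
    have hiL : Nat.clog 2 i = L := by
      have hL' : L = (L - 1) + 1 := by omega
      rw [hL']
      exact clog_eq_of i (L - 1) hi.1 (by rw [← hL']; exact hi.2.trans hup)
    rw [hiL]
  -- block estimates
  have hfull : ∀ k ∈ Finset.Icc 1 (L - 1),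
      |(∑ i ∈ Finset.Ioc (2 ^ (k - 1)) (2 ^ k), f (((i : ℕ) : ℝ) / 2 ^ k)) - (2:ℝ) ^ k * I|
        ≤ M0 := by
    intro k hk
    rw [Finset.mem_Icc] at hk
    have hb := block_est f hmono k (2 ^ k) hk.1
      (Nat.pow_le_pow_right (by norm_num) (by omega)) le_rfl
    have h2k : (0:ℝ) < (2:ℝ) ^ k := by positivity
    have hone : ((2 ^ k : ℕ) : ℝ) / 2 ^ k = 1 := by
      push_cast
      exact div_self (ne_of_gt h2k)
    rw [hone] at hb
    rw [hM0def, hI]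
    exact hb
  have hlast := block_est f hmono L n hL1 (le_of_lt hlow) hup
  -- abbreviations
  set T : ℝ := ∑ i ∈ Finset.Ioc (2 ^ (L - 1)) n, f (((i : ℕ) : ℝ) / 2 ^ L) with hT
  set Ipn : ℝ := ∫ x in (1/2 : ℝ)..((n : ℝ) / 2 ^ L), f x with hIpn
  have hgeom : ∑ k ∈ Finset.Icc 1 (L - 1), (2:ℝ) ^ k = 2 ^ L - 2 := by
    have := geom_Icc (L - 1)
    rwa [show L - 1 + 1 = L by omega] at this
  -- the sum of block errors
  have herr : |∑ k ∈ Finset.Icc 1 (L - 1),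
      ((∑ i ∈ Finset.Ioc (2 ^ (k - 1)) (2 ^ k), f (((i : ℕ) : ℝ) / 2 ^ k)) - (2:ℝ) ^ k * I)|
      ≤ ((L : ℝ) - 1) * M0 := by
    calc _ ≤ ∑ k ∈ Finset.Icc 1 (L - 1),
          |(∑ i ∈ Finset.Ioc (2 ^ (k - 1)) (2 ^ k), f (((i : ℕ) : ℝ) / 2 ^ k)) - (2:ℝ) ^ k * I| :=
        Finset.abs_sum_le_sum_abs _ _
      _ ≤ ∑ _k ∈ Finset.Icc 1 (L - 1), M0 := Finset.sum_le_sum hfull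
      _ = ((L : ℝ) - 1) * M0 := by
        rw [Finset.sum_const, Nat.card_Icc]
        have : L - 1 + 1 - 1 = L - 1 := by omega
        rw [this, nsmul_eq_mul, Nat.cast_sub hL1]
        norm_num
  -- main algebraic identity
  have hA : (∑ k ∈ Finset.Icc 1 (L - 1),
        ∑ i ∈ Finset.Ioc (2 ^ (k - 1)) (2 ^ k), f (((i : ℕ) : ℝ) / 2 ^ k))
      = (∑ k ∈ Finset.Icc 1 (L - 1),
          ((∑ i ∈ Finset.Ioc (2 ^ (k - 1)) (2 ^ k), f (((i : ℕ) : ℝ) / 2 ^ k)) - (2:ℝ) ^ k * I))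
        + ((2:ℝ) ^ L - 2) * I := by
    rw [Finset.sum_sub_distrib, ← Finset.sum_mul, hgeom]
    ring
  rw [hdec1, hdec2, hdec3, sum_dyadic f (L - 1), hA]
  -- put everything together
  have hexp : f 1
      + ((∑ k ∈ Finset.Icc 1 (L - 1),
            ((∑ i ∈ Finset.Ioc (2 ^ (k - 1)) (2 ^ k), f (((i : ℕ) : ℝ) / 2 ^ k)) - (2:ℝ) ^ k * I))
          + ((2:ℝ) ^ L - 2) * I + T)
      - (2:ℝ) ^ L * (I + Ipn)
      = (f 1 - 2 * I)
        + (∑ k ∈ Finset.Icc 1 (L - 1),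
            ((∑ i ∈ Finset.Ioc (2 ^ (k - 1)) (2 ^ k), f (((i : ℕ) : ℝ) / 2 ^ k)) - (2:ℝ) ^ k * I))
        + (T - (2:ℝ) ^ L * Ipn) := by ring
  rw [hexp]
  have hbound : |(f 1 - 2 * I)
        + (∑ k ∈ Finset.Icc 1 (L - 1),
            ((∑ i ∈ Finset.Ioc (2 ^ (k - 1)) (2 ^ k), f (((i : ℕ) : ℝ) / 2 ^ k)) - (2:ℝ) ^ k * I))
        + (T - (2:ℝ) ^ L * Ipn)|
      ≤ (|f 1| + 2 * |I|) + ((L : ℝ) - 1) * M0 + M0 := by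
    have h1' : |f 1 - 2 * I| ≤ |f 1| + 2 * |I| := by
      calc |f 1 - 2 * I| ≤ |f 1| + |2 * I| := abs_sub _ _
        _ = |f 1| + 2 * |I| := by rw [abs_mul]; norm_num
    have h2' : |T - (2:ℝ) ^ L * Ipn| ≤ M0 := hlast
    calc _ ≤ |(f 1 - 2 * I)
          + (∑ k ∈ Finset.Icc 1 (L - 1),
              ((∑ i ∈ Finset.Ioc (2 ^ (k - 1)) (2 ^ k), f (((i : ℕ) : ℝ) / 2 ^ k)) - (2:ℝ) ^ k * I))|
          + |T - (2:ℝ) ^ L * Ipn| := abs_add_le _ _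
      _ ≤ (|f 1 - 2 * I|
          + |∑ k ∈ Finset.Icc 1 (L - 1),
              ((∑ i ∈ Finset.Ioc (2 ^ (k - 1)) (2 ^ k), f (((i : ℕ) : ℝ) / 2 ^ k)) - (2:ℝ) ^ k * I)|)
          + |T - (2:ℝ) ^ L * Ipn| := by gcongr; exact abs_add_le _ _
      _ ≤ _ := by
        have := herr
        linarith
  refine le_trans hbound ?_
  -- logarithmic bounds
  have hnpos : (0:ℝ) < (n : ℝ) := by positivity
  have hlogb1 : 1 ≤ Real.logb 2 n := by
    rw [show (1:ℝ) = Real.logb 2 2 from (Real.logb_self_eq_one (by norm_num)).symm]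
    apply Real.logb_le_logb_of_le one_lt_two (by norm_num)
    exact_mod_cast hn
  have hLlog : (L : ℝ) ≤ 2 * Real.logb 2 n := by
    have hcast : ((2 ^ (L - 1) : ℕ) : ℝ) < (n : ℝ) := by exact_mod_cast hlow
    have hlt : Real.logb 2 ((2:ℝ) ^ (L - 1)) < Real.logb 2 n := by
      apply Real.logb_lt_logb one_lt_two (by positivity)
      push_cast at hcast
      exact hcast
    rw [Real.logb_pow, Real.logb_self_eq_one (by norm_num), mul_one] at hlt
    have : ((L : ℝ) - 1) < Real.logb 2 n := by
      rw [show ((L - 1 : ℕ) : ℝ) = (L : ℝ) - 1 from by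
        rw [Nat.cast_sub hL1]; norm_num] at hlt
      exact hlt
    linarith
  have hLcast1 : (1:ℝ) ≤ (L : ℝ) := by exact_mod_cast hL1
  have hmul1 : ((L : ℝ) - 1) * M0 + M0 = (L : ℝ) * M0 := by ring
  have hmul2 : (L : ℝ) * M0 ≤ 2 * Real.logb 2 n * M0 :=
    mul_le_mul_of_nonneg_right hLlog hM0
  have hmul3 : (|f 1| + 2 * |I| + 1) * 1 ≤ (|f 1| + 2 * |I| + 1) * (2 * Real.logb 2 n) := by
    apply mul_le_mul_of_nonneg_left (by linarith) (by positivity)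
  nlinarith [abs_nonneg (f 1), abs_nonneg I]
end

section
/- There exists a constant C > 0 such that for every integer n ≥ 2, writing p_n = n/2^{⌈log₂ n⌉}, we have | Σ_{i=1}^{n} ( ⌈log₂ i⌉ + 1 − 2^{⌈log₂ i⌉}/i ) − ( n·log₂ n + (1 − log₂ p_n − (1 + ln(4·p_n))/p_n)·n ) | ≤ C·log₂ n. -/
open Finset

/-- Auxiliary: the harmonic-type sum. -/
noncomputable def binsT (n : ℕ) : ℝ := ∑ i ∈ Icc 1 n, (2:ℝ)^(Nat.clog 2 i) / i

/-- Auxiliary: the main smooth term. -/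
noncomputable def binsU (n : ℕ) : ℝ :=
  (2:ℝ)^(Nat.clog 2 n) * Real.log (4 * n / 2^(Nat.clog 2 n))

lemma bins_clog_succ_of_le {n : ℕ} (h : n + 1 ≤ 2 ^ Nat.clog 2 n) :
    Nat.clog 2 (n+1) = Nat.clog 2 n :=
  le_antisymm ((Nat.clog_le_iff_le_pow one_lt_two).mpr h)
    (Nat.clog_mono_right 2 (Nat.le_succ n))

lemma bins_clog_succ_of_pow {n : ℕ} (hn : 1 ≤ n) (h : 2 ^ Nat.clog 2 n < n + 1) :
    n = 2 ^ Nat.clog 2 n ∧ Nat.clog 2 (n+1) = Nat.clog 2 n + 1 := by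
  have h1 : n ≤ 2 ^ Nat.clog 2 n := Nat.le_pow_clog one_lt_two n
  have he : n = 2 ^ Nat.clog 2 n := le_antisymm h1 (Nat.lt_succ_iff.mp h)
  refine ⟨he, le_antisymm ?_ ?_⟩
  · apply (Nat.clog_le_iff_le_pow one_lt_two).mpr
    have : n + 1 ≤ 2 * n := by omega
    calc n + 1 ≤ 2 * n := this
    _ = 2 ^ (Nat.clog 2 n + 1) := by rw [pow_succ]; omega
  · exact (Nat.lt_clog_iff_pow_lt one_lt_two).mpr h

lemma bins_sum_clog (n : ℕ) (hn : 1 ≤ n) :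
    ∑ i ∈ Icc 1 n, (Nat.clog 2 i : ℝ)
      = n * Nat.clog 2 n - 2 ^ Nat.clog 2 n + 1 := by
  induction n, hn using Nat.le_induction with
  | base => simp
  | succ n hn ih =>
    rw [Finset.sum_Icc_succ_top (by omega : 1 ≤ n + 1), ih]
    by_cases h : n + 1 ≤ 2 ^ Nat.clog 2 n
    · rw [bins_clog_succ_of_le h]; push_cast; ring
    · obtain ⟨he, hk⟩ := bins_clog_succ_of_pow hn (lt_of_not_ge h)
      have hre : (n:ℝ) = 2 ^ Nat.clog 2 n := by exact_mod_cast congrArg (Nat.cast : ℕ → ℝ) he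
      rw [hk]
      push_cast
      rw [pow_succ, hre]
      ring

lemma binsU_eq (n : ℕ) (hn : 1 ≤ n) :
    binsU n = 2^(Nat.clog 2 n) *
      (2 * Real.log 2 + Real.log n - Nat.clog 2 n * Real.log 2) := by
  have hn0 : (0:ℝ) < n := by exact_mod_cast hn
  have h4 : Real.log (4 * (n:ℝ)) = 2 * Real.log 2 + Real.log n := by
    rw [Real.log_mul (by norm_num) (ne_of_gt hn0), show (4:ℝ) = 2^2 by norm_num,
      Real.log_pow]
    push_cast; ring
  unfold binsU
  rw [Real.log_div (by positivity) (by positivity), Real.log_pow, h4]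

lemma bins_log_bounds (n : ℕ) (hn : 1 ≤ n) :
    1/((n:ℝ)+1) ≤ Real.log (n+1) - Real.log n ∧
      Real.log (n+1) - Real.log n ≤ 1/(n:ℝ) := by
  have hn0 : (0:ℝ) < n := by exact_mod_cast hn
  have hn1 : (0:ℝ) < (n:ℝ) + 1 := by linarith
  have e1 : Real.log (((n:ℝ)+1)/n) = Real.log (n+1) - Real.log n :=
    Real.log_div (ne_of_gt hn1) (ne_of_gt hn0)
  have e2 : Real.log ((n:ℝ)/(n+1)) = Real.log n - Real.log (n+1) :=
    Real.log_div (ne_of_gt hn0) (ne_of_gt hn1)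
  constructor
  · have := Real.log_le_sub_one_of_pos (div_pos hn0 hn1)
    rw [e2] at this
    have hd : (n:ℝ)/(n+1) - 1 = -(1/((n:ℝ)+1)) := by field_simp; ring
    linarith [hd ▸ this]
  · have := Real.log_le_sub_one_of_pos (div_pos hn1 hn0)
    rw [e1] at this
    have hd : ((n:ℝ)+1)/n - 1 = 1/(n:ℝ) := by field_simp; ring
    linarith [hd ▸ this]

lemma bins_E_bounds (n : ℕ) (hn : 1 ≤ n) :
    0 ≤ binsU n - binsT n + 1 ∧
      binsU n - binsT n + 1
        ≤ 2 * Real.log 2 + Nat.clog 2 n + 1 - 2 ^ Nat.clog 2 n / n := by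
  induction n, hn using Nat.le_induction with
  | base =>
    have hT : binsT 1 = 1 := by simp [binsT]
    have hU : binsU 1 = 2 * Real.log 2 := by
      rw [binsU_eq 1 le_rfl]; simp
    rw [hT, hU]
    constructor
    · have := Real.log_pos (by norm_num : (1:ℝ) < 2)
      linarith
    · simp
  | succ n hn ih =>
    have hn0 : (0:ℝ) < n := by exact_mod_cast hn
    have hn1 : (0:ℝ) < (n:ℝ) + 1 := by linarith
    obtain ⟨hL1, hL2⟩ := bins_log_bounds n hn
    set k := Nat.clog 2 n with hkdef
    have hTstep : binsT (n+1) = binsT n + 2^(Nat.clog 2 (n+1)) / ((n:ℝ)+1) := by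
      unfold binsT
      rw [Finset.sum_Icc_succ_top (by omega : 1 ≤ n + 1)]
      push_cast; ring
    have hUn : binsU n = 2^k * (2 * Real.log 2 + Real.log n - k * Real.log 2) :=
      binsU_eq n hn
    have hUn1 : binsU (n+1) = 2^(Nat.clog 2 (n+1)) *
        (2 * Real.log 2 + Real.log ((n:ℝ)+1) - (Nat.clog 2 (n+1)) * Real.log 2) := by
      have := binsU_eq (n+1) (by omega)
      rw [this]; push_cast; ring
    have hpk : (0:ℝ) < 2^k := by positivity
    have hnlek : (n:ℝ) ≤ 2^k := by
      have := Nat.le_pow_clog one_lt_two n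
      exact_mod_cast this
    by_cases h : n + 1 ≤ 2 ^ k
    · -- same block: clog (n+1) = clog n
      have hk' : Nat.clog 2 (n+1) = k := bins_clog_succ_of_le h
      rw [hk'] at hTstep hUn1
      have hn1le : (n:ℝ) + 1 ≤ 2^k := by exact_mod_cast h
      have key : binsU (n+1) - binsT (n+1) + 1
          = (binsU n - binsT n + 1)
            + 2^k * ((Real.log ((n:ℝ)+1) - Real.log n) - 1/((n:ℝ)+1)) := by
        rw [hTstep, hUn, hUn1]; field_simp; ring
      constructor
      · rw [key]
        have h0 : 0 ≤ (Real.log ((n:ℝ)+1) - Real.log n) - 1/((n:ℝ)+1) := by linarith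
        have hprod : (0:ℝ) ≤ 2^k * ((Real.log ((n:ℝ)+1) - Real.log n) - 1/((n:ℝ)+1)) :=
          mul_nonneg (by positivity) h0
        linarith [ih.1]
      · rw [key, hk']
        have hstep : 2^k * ((Real.log ((n:ℝ)+1) - Real.log n) - 1/((n:ℝ)+1))
            ≤ 2^k * (1/(n:ℝ) - 1/((n:ℝ)+1)) := by
          apply mul_le_mul_of_nonneg_left _ (le_of_lt hpk)
          linarith
        have hid : 2^k * (1/(n:ℝ) - 1/((n:ℝ)+1))
            = 2^k/(n:ℝ) - 2^k/((n:ℝ)+1) := by field_simp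
        have := ih.2
        push_cast
        push_cast at this
        linarith [hid ▸ hstep]
    · -- block boundary: n = 2^k, clog (n+1) = k + 1
      obtain ⟨he, hk'⟩ := bins_clog_succ_of_pow hn (lt_of_not_ge h)
      have hre : (n:ℝ) = 2^k := by exact_mod_cast congrArg (Nat.cast : ℕ → ℝ) he
      have hlogn : Real.log n = k * Real.log 2 := by
        rw [hre, Real.log_pow]
      rw [hk'] at hTstep hUn1
      have key : binsU (n+1) - binsT (n+1) + 1
          = (binsU n - binsT n + 1)
            + 2^(k+1) * ((Real.log ((n:ℝ)+1) - Real.log n) - 1/((n:ℝ)+1)) := by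
        rw [hTstep, hUn, hUn1, hlogn]
        push_cast
        rw [pow_succ]
        ring
      constructor
      · rw [key]
        have h0 : 0 ≤ (Real.log ((n:ℝ)+1) - Real.log n) - 1/((n:ℝ)+1) := by linarith
        have hprod : (0:ℝ) ≤ 2^(k+1) * ((Real.log ((n:ℝ)+1) - Real.log n) - 1/((n:ℝ)+1)) :=
          mul_nonneg (by positivity) h0
        linarith [ih.1]
      · rw [key, hk']
        have hstep : 2^(k+1) * ((Real.log ((n:ℝ)+1) - Real.log n) - 1/((n:ℝ)+1))
            ≤ 2^(k+1) * (1/(n:ℝ) - 1/((n:ℝ)+1)) := by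
          apply mul_le_mul_of_nonneg_left _ (by positivity)
          linarith
        have hid : (2:ℝ)^(k+1) * (1/(n:ℝ) - 1/((n:ℝ)+1)) = 2/((n:ℝ)+1) := by
          rw [pow_succ, ← hre]; field_simp; ring
        have hEn : binsU n - binsT n + 1 ≤ 2 * Real.log 2 + k := by
          have := ih.2
          have h1 : (2:ℝ)^k / n = 1 := by rw [← hre]; field_simp
          push_cast at this ⊢
          linarith [h1 ▸ this]
        have h2n : (2:ℝ)^(k+1) = 2*n := by rw [pow_succ, ← hre]; ring
        have hfin : 2/((n:ℝ)+1) ≤ 2 - 2^(k+1)/((n:ℝ)+1) := by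
          rw [h2n]
          have hsumeq : 2/((n:ℝ)+1) + 2*(n:ℝ)/((n:ℝ)+1) = 2 := by field_simp; ring
          linarith
        push_cast
        linarith [hid ▸ hstep]

/-- the average complexity of BinaryInsertion sort equals
`n·log₂ n + (1 - log₂ p_n - (1 + ln(4p_n))/p_n)·n` up to `O(log n)`,
where `p_n = n/2^⌈log₂ n⌉` with `⌈log₂ ·⌉ = Nat.clog 2`. -/
theorem binaryInsertion_average_complexity : ∃ C : ℝ, 0 < C ∧
    ∀ n : ℕ, 2 ≤ n →
      |(∑ i ∈ Finset.Icc 1 n,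
          ((Nat.clog 2 i : ℝ) + 1 - (2 : ℝ) ^ (Nat.clog 2 i) / (i : ℝ)))
        - ((n : ℝ) * Real.logb 2 n
            + (1 - Real.logb 2 ((n : ℝ) / 2 ^ (Nat.clog 2 n))
                - (1 + Real.log (4 * ((n : ℝ) / 2 ^ (Nat.clog 2 n))))
                    / ((n : ℝ) / 2 ^ (Nat.clog 2 n))) * (n : ℝ))|
      ≤ C * Real.logb 2 n := by
  refine ⟨5, by norm_num, fun n hn => ?_⟩
  have hn1 : 1 ≤ n := by omega
  have hn0 : (0:ℝ) < n := by exact_mod_cast hn1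
  set k := Nat.clog 2 n with hkdef
  have hpk : (0:ℝ) < 2^k := by positivity
  -- split the sum
  have hsplit : ∑ i ∈ Finset.Icc 1 n,
      ((Nat.clog 2 i : ℝ) + 1 - (2 : ℝ) ^ (Nat.clog 2 i) / (i : ℝ))
      = (∑ i ∈ Finset.Icc 1 n, (Nat.clog 2 i : ℝ)) + n - binsT n := by
    rw [Finset.sum_sub_distrib, Finset.sum_add_distrib, Finset.sum_const,
      Nat.card_Icc]
    unfold binsT
    simp
  rw [hsplit, bins_sum_clog n hn1]
  -- rewrite the target
  have hplogb : Real.logb 2 ((n:ℝ) / 2^k) = Real.logb 2 n - k := by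
    rw [Real.logb_div (ne_of_gt hn0) (by positivity), Real.logb_pow,
      Real.logb_self_eq_one (by norm_num : (1:ℝ) < 2)]
    ring
  have hndivp : (n:ℝ) / ((n:ℝ) / 2^k) = 2^k := by
    field_simp
  have hU' : binsU n = 2^k * Real.log (4 * ((n:ℝ) / 2^k)) := by
    unfold binsU
    rw [mul_div_assoc]
  have htarget : (n : ℝ) * Real.logb 2 n
      + (1 - Real.logb 2 ((n : ℝ) / 2 ^ k)
          - (1 + Real.log (4 * ((n : ℝ) / 2 ^ k))) / ((n : ℝ) / 2 ^ k)) * (n : ℝ)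
      = (n:ℝ) * k + n - 2^k - binsU n := by
    rw [hplogb, hU']
    have hp0 : (0:ℝ) < (n:ℝ) / 2^k := by positivity
    field_simp
    ring
  rw [htarget]
  have hdiff : ((n:ℝ) * k - 2 ^ k + 1 + n - binsT n)
      - ((n:ℝ) * k + n - 2^k - binsU n) = binsU n - binsT n + 1 := by ring
  rw [hdiff]
  obtain ⟨hE0, hE1⟩ := bins_E_bounds n hn1
  rw [abs_of_nonneg hE0]
  -- bounds on k and logb
  have hlogb1 : 1 ≤ Real.logb 2 n := by
    have := Real.logb_self_eq_one (by norm_num : (1:ℝ) < 2)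
    calc (1:ℝ) = Real.logb 2 2 := this.symm
    _ ≤ Real.logb 2 n := by
        apply Real.logb_le_logb_of_le (by norm_num : (1:ℝ) < 2) (by norm_num)
        exact_mod_cast hn
  have hk1 : 1 ≤ k := Nat.clog_pos one_lt_two hn
  have hklt : (2:ℕ)^(k-1) < n := Nat.pow_pred_clog_lt_self one_lt_two (by omega)
  have hkle : (k:ℝ) ≤ Real.logb 2 n + 1 := by
    have h1 : ((2:ℝ))^(k-1) < (n:ℝ) := by exact_mod_cast hklt
    have h2 : Real.logb 2 ((2:ℝ)^(k-1)) ≤ Real.logb 2 n :=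
      Real.logb_le_logb_of_le (by norm_num) (by positivity) (le_of_lt h1)
    rw [Real.logb_pow, Real.logb_self_eq_one (by norm_num : (1:ℝ) < 2)] at h2
    have : ((k-1 : ℕ) : ℝ) = (k:ℝ) - 1 := by
      have : (1:ℕ) ≤ k := hk1
      push_cast [Nat.cast_sub this]
      ring
    rw [this, mul_one] at h2
    linarith
  have hlog2 : Real.log 2 ≤ 1 := by
    have := Real.log_le_sub_one_of_pos (by norm_num : (0:ℝ) < 2)
    linarith
  have hEk : binsU n - binsT n + 1 ≤ 2 * Real.log 2 + k + 1 := by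
    have : 0 < 2^k / (n:ℝ) := by positivity
    linarith
  nlinarith [hEk, hkle, hlogb1, hlog2]
end

section
/- For every real p with 1/2 < p ≤ 1 and every positive integer r: if 1/2 < p ≤ (1+√2)/4 then ⌊r/2 − log₂(p(√2−1))⌋ = ⌊r/2⌋ + 2; if (1+√2)/4 < p ≤ (2+√2)/4 then ⌊r/2 − log₂(p(√2−1))⌋ = ⌈r/2⌉ + 1; and if (2+√2)/4 < p ≤ 1 then ⌊r/2 − log₂(p(√2−1))⌋ = ⌊r/2⌋ + 1. -/
set_option maxHeartbeats 1000000


/-- evaluation of `c_r(p) = ⌊r/2 - log₂(p(√2-1))⌋` on the three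
subintervals of `(1/2, 1]`. -/
theorem c_r_evaluation (p : ℝ) (hp1 : 1/2 < p) (hp2 : p ≤ 1) (r : ℕ) (hr : 1 ≤ r) :
    (p ≤ (1 + Real.sqrt 2)/4 →
      ⌊(r : ℝ)/2 - Real.logb 2 (p * (Real.sqrt 2 - 1))⌋ = ⌊(r : ℝ)/2⌋ + 2) ∧
    ((1 + Real.sqrt 2)/4 < p → p ≤ (2 + Real.sqrt 2)/4 →
      ⌊(r : ℝ)/2 - Real.logb 2 (p * (Real.sqrt 2 - 1))⌋ = ⌈(r : ℝ)/2⌉ + 1) ∧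
    ((2 + Real.sqrt 2)/4 < p →
      ⌊(r : ℝ)/2 - Real.logb 2 (p * (Real.sqrt 2 - 1))⌋ = ⌊(r : ℝ)/2⌋ + 1) := by
  have hb : (1:ℝ) < 2 := one_lt_two
  have hs2 : Real.sqrt 2 ^ 2 = 2 := Real.sq_sqrt (by norm_num)
  have hs2pos : 0 < Real.sqrt 2 := Real.sqrt_pos.mpr (by norm_num)
  have hs2lb : 1.414 < Real.sqrt 2 := by nlinarith
  have hs2ub : Real.sqrt 2 < 1.415 := by nlinarith
  have hxpos : 0 < p * (Real.sqrt 2 - 1) := by nlinarith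
  set L := Real.logb 2 (p * (Real.sqrt 2 - 1)) with hLdef
  have e2 : (2:ℝ) ^ (-2:ℝ) = 1/4 := by
    rw [show (-2:ℝ) = ((-2:ℤ):ℝ) by norm_num, Real.rpow_intCast]; norm_num
  have e3 : (2:ℝ) ^ (-3:ℝ) = 1/8 := by
    rw [show (-3:ℝ) = ((-3:ℤ):ℝ) by norm_num, Real.rpow_intCast]; norm_num
  have eh : (2:ℝ) ^ (1/2:ℝ) = Real.sqrt 2 := (Real.sqrt_eq_rpow 2).symm
  have em1 : (2:ℝ) ^ (-1:ℝ) = 1/2 := by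
    rw [show (-1:ℝ) = ((-1:ℤ):ℝ) by norm_num, Real.rpow_intCast]; norm_num
  have e32 : (2:ℝ) ^ (-3/2:ℝ) = Real.sqrt 2 / 4 := by
    rw [show (-3/2:ℝ) = 1/2 + (-2) by norm_num, Real.rpow_add two_pos, eh, e2]; ring
  have e52 : (2:ℝ) ^ (-5/2:ℝ) = Real.sqrt 2 / 8 := by
    rw [show (-5/2:ℝ) = 1/2 + (-3) by norm_num, Real.rpow_add two_pos, eh, e3]; ring
  -- universal bounds
  have hL52 : -5/2 < L := by
    rw [hLdef, Real.lt_logb_iff_rpow_lt hb hxpos, e52]; nlinarith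
  have hL1 : L < -1 := by
    rw [hLdef, Real.logb_lt_iff_lt_rpow hb hxpos, em1]
    nlinarith
  -- floor/ceil of r/2
  obtain ⟨k, hk⟩ := Nat.even_or_odd' r
  rcases hk with hk | hk
  · -- r = 2k
    have hr2 : (r:ℝ)/2 = (k:ℤ) := by rw [hk]; push_cast; ring
    have hf : ⌊(r:ℝ)/2⌋ = (k:ℤ) := by rw [hr2, Int.floor_intCast]
    have hc : ⌈(r:ℝ)/2⌉ = (k:ℤ) := by rw [hr2, Int.ceil_intCast]
    refine ⟨fun h1 => ?_, fun h2a h2b => ?_, fun h3 => ?_⟩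
    · have hL2 : L ≤ -2 := by
        rw [hLdef, Real.logb_le_iff_le_rpow hb hxpos, e2]; nlinarith
      rw [hf, hr2, Int.floor_eq_iff] <;> push_cast <;> constructor <;> linarith
    · have hLa : -2 < L := by
        rw [hLdef, Real.lt_logb_iff_rpow_lt hb hxpos, e2]; nlinarith
      have hLb : L ≤ -3/2 := by
        rw [hLdef, Real.logb_le_iff_le_rpow hb hxpos, e32]; nlinarith
      rw [hc, hr2, Int.floor_eq_iff] <;> push_cast <;> constructor <;> linarith
    · have hLa : -3/2 < L := by
        rw [hLdef, Real.lt_logb_iff_rpow_lt hb hxpos, e32]; nlinarith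
      rw [hf, hr2, Int.floor_eq_iff] <;> push_cast <;> constructor <;> linarith
  · -- r = 2k+1
    have hr2 : (r:ℝ)/2 = (k:ℤ) + 1/2 := by rw [hk]; push_cast; ring
    have hf : ⌊(r:ℝ)/2⌋ = (k:ℤ) := by
      rw [hr2, Int.floor_eq_iff] <;> push_cast <;> constructor <;> linarith
    have hc : ⌈(r:ℝ)/2⌉ = (k:ℤ) + 1 := by
      rw [hr2, Int.ceil_eq_iff] <;> push_cast <;> constructor <;> linarith
    refine ⟨fun h1 => ?_, fun h2a h2b => ?_, fun h3 => ?_⟩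
    · have hL2 : L ≤ -2 := by
        rw [hLdef, Real.logb_le_iff_le_rpow hb hxpos, e2]; nlinarith
      rw [hf, hr2, Int.floor_eq_iff] <;> push_cast <;> constructor <;> linarith
    · have hLa : -2 < L := by
        rw [hLdef, Real.lt_logb_iff_rpow_lt hb hxpos, e2]; nlinarith
      have hLb : L ≤ -3/2 := by
        rw [hLdef, Real.logb_le_iff_le_rpow hb hxpos, e32]; nlinarith
      rw [hc, hr2, Int.floor_eq_iff] <;> push_cast <;> constructor <;> linarith
    · have hLa : -3/2 < L := by
        rw [hLdef, Real.lt_logb_iff_rpow_lt hb hxpos, e32]; nlinarith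
      rw [hf, hr2, Int.floor_eq_iff] <;> push_cast <;> constructor <;> linarith
end

section
/- Let i ≥ 6 be an even integer, let m = ⌈log₂ i⌉, and assume 2^{m−1} < i ≤ 3·2^{m−2} (so m ≥ 3). Set i' = i/2 + 2^{m−3}. Then i' is an integer, ⌈log₂ i'⌉ = m − 1, and i'/2^{m−1} = i/2^{m} + 1/4. -/
/-- for even `i ≥ 6` with `m = ⌈log₂ i⌉` (i.e. `Nat.clog 2 i`) and
`2^{m-1} < i ≤ 3·2^{m-2}`, we have `m ≥ 3`, and `i' = i/2 + 2^{m-3}` is an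
integer with `⌈log₂ i'⌉ = m - 1` and `i'/2^{m-1} = i/2^m + 1/4`. -/
theorem twoMergeStar_residual_instance (i : ℕ) (hi : 6 ≤ i) (heven : Even i)
    (m : ℕ) (hm : m = Nat.clog 2 i)
    (hlow : 2 ^ (m - 1) < i) (hhigh : i ≤ 3 * 2 ^ (m - 2)) :
    3 ≤ m ∧
    ∃ i' : ℕ, (i' : ℝ) = (i : ℝ)/2 + 2 ^ (m - 3) ∧
      Nat.clog 2 i' = m - 1 ∧
      (i' : ℝ) / 2 ^ (m - 1) = (i : ℝ) / 2 ^ m + 1/4 := by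
  have h3 : 3 ≤ m := by
    have h : (2:ℕ) ^ 2 < i := by omega
    have := (Nat.lt_clog_iff_pow_lt one_lt_two).mpr h
    omega
  obtain ⟨k, rfl⟩ : ∃ k, m = k + 3 := ⟨m - 3, by omega⟩
  obtain ⟨j, rfl⟩ := heven
  have hj : 3 ≤ j := by omega
  simp only [show k + 3 - 1 = k + 2 by omega, show k + 3 - 2 = k + 1 by omega,
    show k + 3 - 3 = k by omega] at *
  refine ⟨by omega, j + 2 ^ k, ?_, ?_, ?_⟩
  · push_cast; ring
  · have hb1 : 2 ^ (k + 1) < j + 2 ^ k := by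
      have : 2 ^ (k + 2) = 2 * 2 ^ (k + 1) := by ring
      have h1 : 2 ^ (k + 1) < j := by omega
      have h2 : 2 ^ (k + 1) = 2 * 2 ^ k := by ring
      omega
    have hb2 : j + 2 ^ k ≤ 2 ^ (k + 2) := by
      have h1 : 2 ^ (k + 1) = 2 * 2 ^ k := by ring
      have h2 : 2 ^ (k + 2) = 4 * 2 ^ k := by ring
      omega
    have l1 := (Nat.lt_clog_iff_pow_lt one_lt_two).mpr hb1
    have l2 := (Nat.clog_le_iff_le_pow one_lt_two).mpr hb2
    omega
  · have h1 : (2:ℝ) ^ (k + 2) = 4 * 2 ^ k := by ring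
    have h2 : (2:ℝ) ^ (k + 3) = 8 * 2 ^ k := by ring
    have hp : (0:ℝ) < 2 ^ k := by positivity
    push_cast
    rw [h1, h2]
    field_simp
    ring
end

section
/- Let m ≥ 3 and β be integers with 1 ≤ β ≤ 2^{m−2}, let i = 3·2^{m−2} + β, and let k be an integer with 1 ≤ k ≤ m−2. Then ⌈i − i/2^{k}⌉ − ⌈i − i/2^{k−1}⌉ − 2^{m−k−1} = 2^{m−k−2} + ⌊2β/2^{k}⌋ − ⌊β/2^{k}⌋. -/
lemma floor_nat_div_real (n d : ℕ) : ⌊(n : ℝ) / (d : ℝ)⌋ = (n : ℤ) / (d : ℤ) := by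
  rw [show ((n : ℝ) / (d : ℝ)) = (((n : ℚ) / (d : ℚ) : ℚ) : ℝ) by push_cast; ring,
    Rat.floor_cast, Rat.floor_natCast_div_natCast]

/-- exact identity for the block width `w_{2k}` in the analysis of
2Merge* when `p_i ∈ (3/4, 1]`, with `i = 3·2^{m-2} + β`. -/
theorem twoMergeStar_block_width (m β : ℕ) (hm : 3 ≤ m)
    (hβ1 : 1 ≤ β) (hβ2 : β ≤ 2 ^ (m - 2))
    (i : ℕ) (hi : i = 3 * 2 ^ (m - 2) + β)
    (k : ℕ) (hk1 : 1 ≤ k) (hk2 : k ≤ m - 2) :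
    (⌈(i : ℝ) - (i : ℝ) / 2 ^ k⌉ - ⌈(i : ℝ) - (i : ℝ) / 2 ^ (k - 1)⌉
        - 2 ^ (m - k - 1) : ℤ)
      = 2 ^ (m - k - 2) + ⌊2 * (β : ℝ) / 2 ^ k⌋ - ⌊(β : ℝ) / 2 ^ k⌋ := by
  have hceil : ∀ x : ℝ, ⌈(i : ℝ) - x⌉ = (i : ℤ) - ⌊x⌋ := by
    intro x
    rw [sub_eq_neg_add, show ((i : ℝ)) = ((i : ℤ) : ℝ) by push_cast; ring,
      Int.ceil_add_intCast, Int.ceil_neg]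
    ring
  have hpow : ∀ j : ℕ, ((2 : ℝ) ^ j) = ((2 ^ j : ℕ) : ℝ) := by intro j; push_cast; ring
  have hfl : ∀ j : ℕ, ⌊(i : ℝ) / 2 ^ j⌋ = (i : ℤ) / 2 ^ j := by
    intro j
    rw [hpow, floor_nat_div_real]; push_cast; ring_nf
  have hflβ : ⌊(β : ℝ) / 2 ^ k⌋ = (β : ℤ) / 2 ^ k := by
    rw [hpow, floor_nat_div_real]; push_cast; ring_nf
  have hfl2β : ⌊2 * (β : ℝ) / 2 ^ k⌋ = (2 * β : ℤ) / 2 ^ k := by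
    rw [show (2 * (β : ℝ)) = ((2 * β : ℕ) : ℝ) by push_cast; ring, hpow,
      floor_nat_div_real]
    push_cast; ring_nf
  rw [hceil, hceil, hfl, hfl, hflβ, hfl2β]
  -- now pure integer arithmetic
  set a : ℕ := m - 2 - k with ha
  have hm2 : m - 2 = k + a := by omega
  have hmk1 : m - k - 1 = a + 1 := by omega
  have hmk2 : m - k - 2 = a := by omega
  have hk' : k = (k - 1) + 1 := by omega
  have hiZ : (i : ℤ) = 3 * 2 ^ (k + a) + β := by rw [hi, hm2]; push_cast; ring
  have h2k : (0 : ℤ) < 2 ^ k := by positivity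
  have h2k1 : (0 : ℤ) < 2 ^ (k - 1) := by positivity
  have e1 : (i : ℤ) / 2 ^ k = (β : ℤ) / 2 ^ k + 3 * 2 ^ a := by
    rw [hiZ, show (3 * 2 ^ (k + a) + (β : ℤ)) = (β : ℤ) + 3 * 2 ^ a * 2 ^ k by ring,
      Int.add_mul_ediv_right _ _ (ne_of_gt h2k)]
  have e2 : (i : ℤ) / 2 ^ (k - 1) = (β : ℤ) / 2 ^ (k - 1) + 3 * 2 ^ (a + 1) := by
    rw [hiZ, show (3 * 2 ^ (k + a) + (β : ℤ))
        = (β : ℤ) + 3 * 2 ^ (a + 1) * 2 ^ (k - 1) by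
        rw [show k + a = (a + 1) + (k - 1) by omega]; ring,
      Int.add_mul_ediv_right _ _ (ne_of_gt h2k1)]
  have e3 : (2 * β : ℤ) / 2 ^ k = (β : ℤ) / 2 ^ (k - 1) := by
    rw [show (2 : ℤ) ^ k = 2 * 2 ^ (k - 1) by rw [← pow_succ']; congr 1]
    exact Int.mul_ediv_mul_of_pos _ _ (by norm_num)
  rw [e1, e2, e3, hmk1, hmk2]
  ring
end
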